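/- Thompson's group F, presented as ⟨x₀, x₁ | [x₀x₁⁻¹, x₁^{x₀}] = [x₀x₁⁻¹, x₁^{x₀²}] = 1⟩, has no proper non-abelian quotients: every normal subgroup N of F with F/N non-abelian is trivial. Equivalently, every non-injective group homomorphism from F to any group has abelian image. -/

import Mathlib

open scoped commutatorElement

/-- The relators of the standard finite presentation
`F ≅ ⟨x₀, x₁ | [x₀x₁⁻¹, x₁^{x₀}] = [x₀x₁⁻¹, x₁^{x₀²}] = 1⟩` of Thompson's group `F`,
written out with the paper's word-order (right-action) convention translated into
Mathlib's multiplication: the word `x₀x₁⁻¹` is `x₁⁻¹ * x₀` and `x₁^{x₀} = x₀⁻¹x₁x₀`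
is `x₀ * x₁ * x₀⁻¹`. -/
def thompsonRels : Set (FreeGroup (Fin 2)) :=
  { ⁅(FreeGroup.of (1 : Fin 2))⁻¹ * FreeGroup.of (0 : Fin 2),
      FreeGroup.of (0 : Fin 2) * FreeGroup.of (1 : Fin 2) * (FreeGroup.of (0 : Fin 2))⁻¹⁆,
    ⁅(FreeGroup.of (1 : Fin 2))⁻¹ * FreeGroup.of (0 : Fin 2),
      FreeGroup.of (0 : Fin 2) ^ 2 * FreeGroup.of (1 : Fin 2) *
        (FreeGroup.of (0 : Fin 2) ^ 2)⁻¹⁆ }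

/-- Thompson's group `F`, given by its standard finite presentation. -/
abbrev ThompsonF : Type := PresentedGroup thompsonRels

namespace ThompsonAux

/-- Cantor space. -/
abbrev Cantor : Type := ℕ → Bool

/-- Prepend a bit. -/
def cns (b : Bool) (s : Cantor) : Cantor := fun n => match n with
  | 0 => b
  | n+1 => s n

/-- Tail. -/
def tl (s : Cantor) : Cantor := fun n => s (n+1)

@[simp] lemma cns_zero (b : Bool) (s : Cantor) : cns b s 0 = b := rfl
@[simp] lemma cns_succ (b : Bool) (s : Cantor) (n : ℕ) : cns b s (n+1) = s n := rfl
@[simp] lemma tl_cns (b : Bool) (s : Cantor) : tl (cns b s) = s := rfl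
@[simp] lemma tl_app (s : Cantor) (n : ℕ) : tl s n = s (n+1) := rfl

lemma eta (s : Cantor) : cns (s 0) (tl s) = s := by
  funext n; cases n <;> rfl

lemma eta' {s : Cantor} {b : Bool} (h : s 0 = b) : cns b (tl s) = s := by
  subst h; exact eta s

/-- Forward map of the basic generator `X₀`:
`00t ↦ 0t`, `01t ↦ 10t`, `1t ↦ 11t`. -/
def f0 (s : Cantor) : Cantor :=
  if s 0 then cns true (cns true (tl s))
  else if s 1 then cns true (cns false (tl (tl s)))
  else cns false (tl (tl s))

/-- Inverse map: `0t ↦ 00t`, `10t ↦ 01t`, `11t ↦ 1t`. -/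
def g0 (s : Cantor) : Cantor :=
  if s 0 then (if s 1 then cns true (tl (tl s)) else cns false (cns true (tl (tl s))))
  else cns false (cns false (tl s))

@[simp] lemma f0_tt (s : Cantor) : f0 (cns true s) = cns true (cns true s) := by
  simp [f0, eta]
@[simp] lemma f0_ff (s : Cantor) : f0 (cns false (cns false s)) = cns false s := by
  simp [f0]
@[simp] lemma f0_ft (s : Cantor) : f0 (cns false (cns true s)) = cns true (cns false s) := by
  simp [f0]
@[simp] lemma g0_f (s : Cantor) : g0 (cns false s) = cns false (cns false s) := by
  simp [g0]
@[simp] lemma g0_tf (s : Cantor) : g0 (cns true (cns false s)) = cns false (cns true s) := by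
  simp [g0]
@[simp] lemma g0_tt (s : Cantor) : g0 (cns true (cns true s)) = cns true s := by
  simp [g0, eta]

lemma g0_f0 (s : Cantor) : g0 (f0 s) = s := by
  rcases h0 : s 0 with _ | _
  · rcases h1 : s 1 with _ | _
    · have : s = cns false (cns false (tl (tl s))) := by
        funext n; cases n with
        | zero => simpa using h0.symm
        | succ m => cases m with
          | zero => simpa using h1.symm
          | succ k => rfl
      rw [this]; simp
    · have : s = cns false (cns true (tl (tl s))) := by
        funext n; cases n with
        | zero => simpa using h0.symm
        | succ m => cases m with
          | zero => simpa using h1.symm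
          | succ k => rfl
      rw [this]; simp
  · have : s = cns true (tl s) := (eta' h0).symm
    rw [this]; simp

lemma f0_g0 (s : Cantor) : f0 (g0 s) = s := by
  rcases h0 : s 0 with _ | _
  · have : s = cns false (tl s) := (eta' h0).symm
    rw [this]; simp
  · rcases h1 : s 1 with _ | _
    · have : s = cns true (cns false (tl (tl s))) := by
        funext n; cases n with
        | zero => simpa using h0.symm
        | succ m => cases m with
          | zero => simpa using h1.symm
          | succ k => rfl
      rw [this]; simp
    · have : s = cns true (cns true (tl (tl s))) := by
        funext n; cases n with
        | zero => simpa using h0.symm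
        | succ m => cases m with
          | zero => simpa using h1.symm
          | succ k => rfl
      rw [this]; simp

/-- The basic generator of the model. -/
def X0 : Equiv.Perm Cantor := ⟨f0, g0, g0_f0, f0_g0⟩

/-- Copy of a permutation inside the cylinder `C₁`. -/
def c1fun (p : Cantor → Cantor) (s : Cantor) : Cantor :=
  if s 0 then cns true (p (tl s)) else s

def c1 (p : Equiv.Perm Cantor) : Equiv.Perm Cantor :=
  ⟨c1fun p, c1fun p.symm, by
     intro s; rcases h : s 0 with _|_
     · simp [c1fun, h]
     · simp [c1fun, h, eta' h], by
     intro s; rcases h : s 0 with _|_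
     · simp [c1fun, h]
     · simp [c1fun, h, eta' h]⟩

/-- Copy inside the cylinder `C₀`. -/
def c0fun (p : Cantor → Cantor) (s : Cantor) : Cantor :=
  if s 0 then s else cns false (p (tl s))

def c0 (p : Equiv.Perm Cantor) : Equiv.Perm Cantor :=
  ⟨c0fun p, c0fun p.symm, by
     intro s; rcases h : s 0 with _|_
     · simp [c0fun, h, eta' h]
     · simp [c0fun, h], by
     intro s; rcases h : s 0 with _|_
     · simp [c0fun, h, eta' h]
     · simp [c0fun, h]⟩

@[simp] lemma c1_t (p : Equiv.Perm Cantor) (s : Cantor) :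
    c1 p (cns true s) = cns true (p s) := by simp [c1, c1fun]
@[simp] lemma c1_f (p : Equiv.Perm Cantor) (s : Cantor) :
    c1 p (cns false s) = cns false s := by simp [c1, c1fun]
@[simp] lemma c0_t (p : Equiv.Perm Cantor) (s : Cantor) :
    c0 p (cns true s) = cns true s := by simp [c0, c0fun]
@[simp] lemma c0_f (p : Equiv.Perm Cantor) (s : Cantor) :
    c0 p (cns false s) = cns false (p s) := by simp [c0, c0fun]

lemma perm_ext (p q : Equiv.Perm Cantor) (h : ∀ s, p s = q s) : p = q :=
  Equiv.ext h

lemma cantor_cases (P : Cantor → Prop)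
    (h1 : ∀ s, P (cns true s)) (h2 : ∀ s, P (cns false s)) : ∀ s, P s := by
  intro s
  rcases h : s 0 with _|_
  · rw [← eta' h]; exact h2 _
  · rw [← eta' h]; exact h1 _

lemma c1_mul (p q : Equiv.Perm Cantor) : c1 (p * q) = c1 p * c1 q := by
  apply perm_ext
  apply cantor_cases <;> intro s <;> simp [Equiv.Perm.mul_apply]

lemma c0_mul (p q : Equiv.Perm Cantor) : c0 (p * q) = c0 p * c0 q := by
  apply perm_ext
  apply cantor_cases <;> intro s <;> simp [Equiv.Perm.mul_apply]

@[simp] lemma c1_one : c1 1 = 1 := by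
  apply perm_ext; apply cantor_cases <;> intro s <;> simp [eta]
@[simp] lemma c0_one : c0 1 = 1 := by
  apply perm_ext; apply cantor_cases <;> intro s <;> simp [eta]

lemma c1_inv (p : Equiv.Perm Cantor) : c1 p⁻¹ = (c1 p)⁻¹ := by
  rw [eq_inv_iff_mul_eq_one, ← c1_mul]; simp
lemma c0_inv (p : Equiv.Perm Cantor) : c0 p⁻¹ = (c0 p)⁻¹ := by
  rw [eq_inv_iff_mul_eq_one, ← c0_mul]; simp

/-- The R1 rule : `X₀ ∘ c₁ π ∘ X₀⁻¹ = c₁ (c₁ π)`. -/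
lemma R1 (p : Equiv.Perm Cantor) : X0 * c1 p * X0⁻¹ = c1 (c1 p) := by
  rw [mul_inv_eq_iff_eq_mul]
  apply perm_ext
  apply cantor_cases
  · intro s
    simp only [Equiv.Perm.mul_apply]
    show f0 (c1 p (cns true s)) = c1 (c1 p) (f0 (cns true s))
    simp
  · intro s
    induction s using cantor_cases with
    | h1 s =>
      show f0 (c1 p (cns false (cns true s))) = c1 (c1 p) (f0 (cns false (cns true s)))
      simp
    | h2 s =>
      show f0 (c1 p (cns false (cns false s))) = c1 (c1 p) (f0 (cns false (cns false s)))
      simp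

/-- The R2 rule : `X₀ ∘ c₀ (c₀ π) ∘ X₀⁻¹ = c₀ π`. -/
lemma R2 (p : Equiv.Perm Cantor) : X0 * c0 (c0 p) * X0⁻¹ = c0 p := by
  rw [mul_inv_eq_iff_eq_mul]
  apply perm_ext
  apply cantor_cases
  · intro s
    show f0 (c0 (c0 p) (cns true s)) = c0 p (f0 (cns true s))
    simp
  · intro s
    induction s using cantor_cases with
    | h1 s =>
      show f0 (c0 (c0 p) (cns false (cns true s))) = c0 p (f0 (cns false (cns true s)))
      simp
    | h2 s =>
      show f0 (c0 (c0 p) (cns false (cns false s))) = c0 p (f0 (cns false (cns false s)))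
      simp

/-- The R3 rule : `X₀ ∘ c₀ (c₁ π) ∘ X₀⁻¹ = c₁ (c₀ π)`. -/
lemma R3 (p : Equiv.Perm Cantor) : X0 * c0 (c1 p) * X0⁻¹ = c1 (c0 p) := by
  rw [mul_inv_eq_iff_eq_mul]
  apply perm_ext
  apply cantor_cases
  · intro s
    show f0 (c0 (c1 p) (cns true s)) = c1 (c0 p) (f0 (cns true s))
    simp
  · intro s
    induction s using cantor_cases with
    | h1 s =>
      show f0 (c0 (c1 p) (cns false (cns true s))) = c1 (c0 p) (f0 (cns false (cns true s)))
      simp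
    | h2 s =>
      show f0 (c0 (c1 p) (cns false (cns false s))) = c1 (c0 p) (f0 (cns false (cns false s)))
      simp

/-- The model generators `X n`. -/
def X : ℕ → Equiv.Perm Cantor
  | 0 => X0
  | n+1 => c1 (X n)

@[simp] lemma X_succ (n : ℕ) : X (n+1) = c1 (X n) := rfl

lemma c1_X (n : ℕ) : c1 (X n) = X (n+1) := rfl

/-- Conjugation relation in the model : for `j < i`, `X j * X i * (X j)⁻¹ = X (i+1)`. -/
lemma Xrel : ∀ j i : ℕ, j < i → X j * X i * (X j)⁻¹ = X (i+1) := by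
  intro j
  induction j with
  | zero =>
    intro i hi
    obtain ⟨k, rfl⟩ : ∃ k, i = k + 1 := ⟨i - 1, by omega⟩
    show X0 * c1 (X k) * X0⁻¹ = c1 (c1 (X k))
    exact R1 _
  | succ j ih =>
    intro i hi
    obtain ⟨k, rfl⟩ : ∃ k, i = k + 1 := ⟨i - 1, by omega⟩
    show c1 (X j) * c1 (X k) * (c1 (X j))⁻¹ = c1 (X (k+1))
    rw [← c1_inv, ← c1_mul, ← c1_mul, ih k (by omega)]

end ThompsonAux

namespace ThompsonAux

abbrev P : Type := ThompsonF

def a : P := PresentedGroup.of 0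
def b : P := PresentedGroup.of 1

/-- The generators of `P`. -/
def x : ℕ → P
  | 0 => a
  | 1 => b
  | (n+2) => a * x (n+1) * a⁻¹

lemma x_succ : ∀ n : ℕ, 1 ≤ n → x (n+1) = a * x n * a⁻¹
  | 0, h => absurd h (by norm_num)
  | (n+1), _ => rfl

/-- The relators hold in `P`. -/
lemma relator_mem (r : FreeGroup (Fin 2)) (hr : r ∈ thompsonRels) :
    (QuotientGroup.mk r : P) = 1 := by
  rw [QuotientGroup.eq_one_iff]
  exact Subgroup.subset_normalClosure hr

lemma of_eq_mk (i : Fin 2) :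
    (PresentedGroup.of i : P) = QuotientGroup.mk (FreeGroup.of i) := rfl

lemma mk_hom_mul (u v : FreeGroup (Fin 2)) :
    (QuotientGroup.mk (u * v) : P) = QuotientGroup.mk u * QuotientGroup.mk v := rfl

lemma rel1 : Commute (b⁻¹ * a) (a * b * a⁻¹) := by
  rw [← commutatorElement_eq_one_iff_commute]
  have := relator_mem _ (Set.mem_insert _ _)
  calc ⁅b⁻¹ * a, a * b * a⁻¹⁆
      = (show P from QuotientGroup.mk ⁅(FreeGroup.of (1 : Fin 2))⁻¹ * FreeGroup.of (0 : Fin 2),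
      FreeGroup.of (0 : Fin 2) * FreeGroup.of (1 : Fin 2) * (FreeGroup.of (0 : Fin 2))⁻¹⁆ : P) := by
        simp only [commutatorElement_def, a, b, of_eq_mk]
        rfl
    _ = 1 := this

lemma rel2 : Commute (b⁻¹ * a) (a ^ 2 * b * (a ^ 2)⁻¹) := by
  rw [← commutatorElement_eq_one_iff_commute]
  have := relator_mem _ (Set.mem_insert_of_mem _ rfl)
  calc ⁅b⁻¹ * a, a ^ 2 * b * (a ^ 2)⁻¹⁆
      = (show P from QuotientGroup.mk ⁅(FreeGroup.of (1 : Fin 2))⁻¹ * FreeGroup.of (0 : Fin 2),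
      FreeGroup.of (0 : Fin 2) ^ 2 * FreeGroup.of (1 : Fin 2) *
        (FreeGroup.of (0 : Fin 2) ^ 2)⁻¹⁆ : P) := by
        simp only [commutatorElement_def, a, b, of_eq_mk]
        rfl
    _ = 1 := this

lemma x2_def : x 2 = a * b * a⁻¹ := rfl
lemma x3_def : x 3 = a * (a * b * a⁻¹) * a⁻¹ := rfl

/-- From `(d⁻¹c) z = z (d⁻¹c)` conclude `d z d⁻¹ = c z c⁻¹`. -/
lemma conj_eq_of_comm {c d z : P} (h : (d⁻¹ * c) * z = z * (d⁻¹ * c)) :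
    d * z * d⁻¹ = c * z * c⁻¹ := by
  have key : d * ((d⁻¹ * c) * z) * c⁻¹ = d * (z * (d⁻¹ * c)) * c⁻¹ := by rw [h]
  have l : d * ((d⁻¹ * c) * z) * c⁻¹ = c * z * c⁻¹ := by group
  have r : d * (z * (d⁻¹ * c)) * c⁻¹ = d * z * d⁻¹ := by group
  rw [l, r] at key
  exact key.symm

/-- Base case `D 2` : `b * x 2 * b⁻¹ = x 3`. -/
lemma D2 : x 1 * x 2 * (x 1)⁻¹ = x 3 := by
  show b * (a * b * a⁻¹) * b⁻¹ = a * (a * b * a⁻¹) * a⁻¹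
  exact conj_eq_of_comm rel1.eq

/-- Base case `D 3` : `b * x 3 * b⁻¹ = x 4`. -/
lemma D3 : x 1 * x 3 * (x 1)⁻¹ = x 4 := by
  have e : x 3 = a ^ 2 * b * (a ^ 2)⁻¹ := by
    show a * (a * b * a⁻¹) * a⁻¹ = _
    rw [sq]; group
  show b * x 3 * b⁻¹ = a * x 3 * a⁻¹
  rw [e]
  exact conj_eq_of_comm rel2.eq

/-- `D i` for all `i ≥ 2`, by strong induction. -/
lemma D : ∀ i : ℕ, 2 ≤ i → x 1 * x i * (x 1)⁻¹ = x (i+1) := by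
  intro i
  induction i using Nat.strong_induction_on with
  | _ i ih =>
    intro hi
    match i, hi with
    | 2, _ => exact D2
    | 3, _ => exact D3
    | (m+4), _ => ?_
    set i := m + 4 with hidef
    -- G (i-1) : x 2 * x (i-1) * (x 2)⁻¹ = x i, from D (i-2)
    have G : ∀ k, 3 ≤ k → k ≤ i → x 2 * x k * (x 2)⁻¹ = x (k+1) := by
      intro k hk hk'
      have hD := ih (k-1) (by omega) (by omega)
      have hk1 : x k = a * x (k-1) * a⁻¹ := by
        have := x_succ (k-1) (by omega)
        simpa [Nat.sub_add_cancel (by omega : 1 ≤ k)] using this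
      have hk2 : x (k+1) = a * x k * a⁻¹ := x_succ k (by omega)
      have hk3 : (k - 1) + 1 = k := by omega
      rw [x2_def, hk1, hk2, hk1]
      show a * b * a⁻¹ * (a * x (k-1) * a⁻¹) * (a * b * a⁻¹)⁻¹
          = a * (a * x (k-1) * a⁻¹) * a⁻¹
      have : b * x (k-1) * b⁻¹ = x k := by rw [← hk3]; exact hD
      calc a * b * a⁻¹ * (a * x (k-1) * a⁻¹) * (a * b * a⁻¹)⁻¹
          = a * (b * x (k-1) * b⁻¹) * a⁻¹ := by group
        _ = a * x k * a⁻¹ := by rw [this]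
        _ = a * (a * x (k-1) * a⁻¹) * a⁻¹ := by rw [hk1]
    -- H i : x 3 * x i * (x 3)⁻¹ = x (i+1), from G (i-1)
    have H : x 3 * x i * (x 3)⁻¹ = x (i+1) := by
      have hG := G (i-1) (by omega) (by omega)
      have hi1 : x i = a * x (i-1) * a⁻¹ := by
        have := x_succ (i-1) (by omega)
        simpa [Nat.sub_add_cancel (by omega : 1 ≤ i)] using this
      have hi2 : x (i+1) = a * x i * a⁻¹ := x_succ i (by omega)
      have hi3 : (i - 1) + 1 = i := by omega
      rw [hi3] at hG
      have h3 : x 3 = a * x 2 * a⁻¹ := rfl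
      rw [h3, hi1, hi2, hi1]
      calc a * x 2 * a⁻¹ * (a * x (i-1) * a⁻¹) * (a * x 2 * a⁻¹)⁻¹
          = a * (x 2 * x (i-1) * (x 2)⁻¹) * a⁻¹ := by group
        _ = a * (a * x (i-1) * a⁻¹) * a⁻¹ := by
            rw [show x 2 * x (i-1) * (x 2)⁻¹ = x i from hG, hi1]
    -- now D i
    have hGi : x 2 * x (i-1) * (x 2)⁻¹ = x i := by
      have := G (i-1) (by omega) (by omega)
      rwa [show (i-1)+1 = i by omega] at this
    have hD1 := ih (i-1) (by omega) (by omega)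
    rw [show (i-1)+1 = i by omega] at hD1
    calc x 1 * x i * (x 1)⁻¹
        = x 1 * (x 2 * x (i-1) * (x 2)⁻¹) * (x 1)⁻¹ := by rw [hGi]
      _ = (x 1 * x 2 * (x 1)⁻¹) * (x 1 * x (i-1) * (x 1)⁻¹) * (x 1 * x 2 * (x 1)⁻¹)⁻¹ := by
          group
      _ = x 3 * x i * (x 3)⁻¹ := by rw [D2, hD1]
      _ = x (i+1) := H

/-- The full family of conjugation relations in `P`. -/
lemma rel : ∀ j i : ℕ, j < i → x j * x i * (x j)⁻¹ = x (i+1) := by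
  intro j
  induction j with
  | zero =>
    intro i hi
    exact (x_succ i (by omega)).symm
  | succ j ih =>
    intro i hi
    rcases Nat.eq_or_lt_of_le (by omega : 1 ≤ j + 1) with hj | hj
    · -- j + 1 = 1
      have : j = 0 := by omega
      subst this
      exact D i (by omega)
    · -- j + 1 ≥ 2
      have hxj : x (j+1) = a * x j * a⁻¹ := x_succ j (by omega)
      have hxi : x i = a * x (i-1) * a⁻¹ := by
        have := x_succ (i-1) (by omega)
        rwa [show (i-1)+1 = i by omega] at this
      have hxi1 : x (i+1) = a * x i * a⁻¹ := x_succ i (by omega)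
      have hIH := ih (i-1) (by omega)
      rw [show (i-1)+1 = i by omega] at hIH
      rw [hxj, hxi, hxi1, hxi]
      calc a * x j * a⁻¹ * (a * x (i-1) * a⁻¹) * (a * x j * a⁻¹)⁻¹
          = a * (x j * x (i-1) * (x j)⁻¹) * a⁻¹ := by group
        _ = a * (a * x (i-1) * a⁻¹) * a⁻¹ := by rw [hIH, hxi]

lemma rel_mul {j i : ℕ} (h : j < i) : x j * x i = x (i+1) * x j := by
  have := rel j i h
  calc x j * x i = (x j * x i * (x j)⁻¹) * x j := by group
    _ = x (i+1) * x j := by rw [this]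

end ThompsonAux

namespace ThompsonAux

/-- The assignment of generators to model permutations. -/
def Xf : Fin 2 → Equiv.Perm Cantor := ![X0, X 1]

lemma commute_X1invX0_X (i : ℕ) (hi : 2 ≤ i) :
    Commute ((X 1)⁻¹ * X 0) (X i) := by
  have h0 : X 0 * X i * (X 0)⁻¹ = X (i+1) := Xrel 0 i (by omega)
  have h1 : X 1 * X i * (X 1)⁻¹ = X (i+1) := Xrel 1 i (by omega)
  have : ((X 1)⁻¹ * X 0) * X i * ((X 1)⁻¹ * X 0)⁻¹ = X i := by
    calc ((X 1)⁻¹ * X 0) * X i * ((X 1)⁻¹ * X 0)⁻¹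
        = (X 1)⁻¹ * (X 0 * X i * (X 0)⁻¹) * X 1 := by group
      _ = (X 1)⁻¹ * (X 1 * X i * (X 1)⁻¹) * X 1 := by rw [h0, h1]
      _ = X i := by group
  calc ((X 1)⁻¹ * X 0) * X i
      = (((X 1)⁻¹ * X 0) * X i * ((X 1)⁻¹ * X 0)⁻¹) * ((X 1)⁻¹ * X 0) := by group
    _ = X i * ((X 1)⁻¹ * X 0) := by rw [this]

lemma Xf_relators : ∀ r ∈ thompsonRels, (FreeGroup.lift Xf) r = 1 := by
  intro r hr
  have e0 : (FreeGroup.lift Xf) (FreeGroup.of (0 : Fin 2)) = X 0 := by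
    simp [Xf]; rfl
  have e1 : (FreeGroup.lift Xf) (FreeGroup.of (1 : Fin 2)) = X 1 := by
    simp [Xf]
  rcases hr with h | h
  · subst h
    rw [map_commutatorElement, map_mul, map_inv, map_mul, map_mul, map_inv, e0, e1]
    rw [commutatorElement_eq_one_iff_commute]
    have h2 : X 0 * X 1 * (X 0)⁻¹ = X 2 := Xrel 0 1 (by omega)
    rw [h2]
    exact commute_X1invX0_X 2 (by omega)
  · rw [Set.mem_singleton_iff] at h
    subst h
    rw [map_commutatorElement, map_mul, map_inv, map_mul, map_mul, map_inv, map_pow, e0, e1]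
    rw [commutatorElement_eq_one_iff_commute]
    have h3 : X 0 ^ 2 * X 1 * (X 0 ^ 2)⁻¹ = X 3 := by
      have ha : X 0 * X 1 * (X 0)⁻¹ = X 2 := Xrel 0 1 (by omega)
      have hb : X 0 * X 2 * (X 0)⁻¹ = X 3 := Xrel 0 2 (by omega)
      calc X 0 ^ 2 * X 1 * (X 0 ^ 2)⁻¹
          = X 0 * (X 0 * X 1 * (X 0)⁻¹) * (X 0)⁻¹ := by rw [sq]; group
        _ = X 3 := by rw [ha, hb]
    rw [h3]
    exact commute_X1invX0_X 3 (by omega)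

/-- The model representation of Thompson's group. -/
def ρ : P →* Equiv.Perm Cantor := PresentedGroup.toGroup Xf_relators

@[simp] lemma ρ_a : ρ a = X 0 := PresentedGroup.toGroup.of Xf_relators
@[simp] lemma ρ_b : ρ b = X 1 := PresentedGroup.toGroup.of Xf_relators

@[simp] lemma ρ_x (n : ℕ) : ρ (x n) = X n := by
  induction n using Nat.strong_induction_on with
  | _ n ih =>
    match n with
    | 0 => exact ρ_a
    | 1 => exact ρ_b
    | (m+2) =>
      show ρ (a * x (m+1) * a⁻¹) = X (m+2)
      rw [map_mul, map_mul, map_inv, ρ_a, ih (m+1) (by omega)]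
      exact Xrel 0 (m+1) (by omega)

end ThompsonAux

namespace ThompsonAux

/-- Product in `P` of a list of generator indices. -/
def Pl (l : List ℕ) : P := (l.map x).prod

@[simp] lemma Pl_nil : Pl [] = 1 := rfl
@[simp] lemma Pl_cons (j : ℕ) (l : List ℕ) : Pl (j :: l) = x j * Pl l := by
  simp [Pl]
lemma Pl_append (l₁ l₂ : List ℕ) : Pl (l₁ ++ l₂) = Pl l₁ * Pl l₂ := by
  simp [Pl]

/-- Product in the model of a list of generator indices. -/
def Xl (l : List ℕ) : Equiv.Perm Cantor := (l.map X).prod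

@[simp] lemma Xl_nil : Xl [] = 1 := rfl
@[simp] lemma Xl_cons (j : ℕ) (l : List ℕ) : Xl (j :: l) = X j * Xl l := by
  simp [Xl]
lemma Xl_append (l₁ l₂ : List ℕ) : Xl (l₁ ++ l₂) = Xl l₁ * Xl l₂ := by
  simp [Xl]

@[simp] lemma ρ_Pl (l : List ℕ) : ρ (Pl l) = Xl l := by
  induction l with
  | nil => simp
  | cons j t ih => simp [ih]

/-- Insertion into a nonincreasing list, implementing left multiplication by `x j`. -/
def ins (j : ℕ) : List ℕ → List ℕ
  | [] => [j]
  | i :: t => if j < i then (i+1) :: ins j t else j :: i :: t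

/-- Normal form. -/
def NF : List ℕ → List ℕ
  | [] => []
  | j :: l => ins j (NF l)

lemma Pl_ins (j : ℕ) (l : List ℕ) : Pl (ins j l) = x j * Pl l := by
  induction l with
  | nil => simp [ins]
  | cons i t ih =>
    by_cases h : j < i
    · simp only [ins, if_pos h, Pl_cons, ih]
      rw [← mul_assoc, ← rel_mul h, mul_assoc]
    · simp [ins, if_neg h]

lemma Pl_NF (l : List ℕ) : Pl (NF l) = Pl l := by
  induction l with
  | nil => rfl
  | cons j t ih => simp [NF, Pl_ins, ih]

lemma ins_mem (j : ℕ) (l : List ℕ) :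
    ∀ m ∈ ins j l, m = j ∨ ∃ k ∈ l, m = k ∨ m = k + 1 := by
  induction l with
  | nil => intro m hm; simp [ins] at hm; tauto
  | cons i t ih =>
    intro m hm
    by_cases h : j < i
    · simp only [ins, if_pos h, List.mem_cons] at hm
      rcases hm with rfl | hm
      · exact Or.inr ⟨i, by simp, Or.inr rfl⟩
      · rcases ih m hm with h' | ⟨k, hk, h'⟩
        · exact Or.inl h'
        · exact Or.inr ⟨k, by simp [hk], h'⟩
    · simp only [ins, if_neg h, List.mem_cons] at hm
      rcases hm with rfl | rfl | hm
      · exact Or.inl rfl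
      · exact Or.inr ⟨m, by simp, Or.inl rfl⟩
      · exact Or.inr ⟨m, by simp [hm], Or.inl rfl⟩

/-- Nonincreasing lists. -/
abbrev Noninc (l : List ℕ) : Prop := l.Pairwise (· ≥ ·)

lemma ins_sorted (j : ℕ) (l : List ℕ) (h : Noninc l) : Noninc (ins j l) := by
  induction l with
  | nil => simp [ins, Noninc]
  | cons i t ih =>
    obtain ⟨hhead, htail⟩ := List.pairwise_cons.mp h
    by_cases hj : j < i
    · simp only [ins, if_pos hj]
      refine List.pairwise_cons.mpr ⟨?_, ih htail⟩
      intro m hm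
      rcases ins_mem j t m hm with rfl | ⟨k, hk, hmk⟩
      · omega
      · have := hhead k hk
        omega
    · simp only [ins, if_neg hj]
      refine List.pairwise_cons.mpr ⟨?_, List.pairwise_cons.mpr ⟨hhead, htail⟩⟩
      intro m hm
      rcases List.mem_cons.mp hm with rfl | hm
      · omega
      · have := hhead m hm; omega

lemma NF_sorted (l : List ℕ) : Noninc (NF l) := by
  induction l with
  | nil => simp [NF, Noninc]
  | cons j t ih => exact ins_sorted j _ ih

end ThompsonAux

namespace ThompsonAux

/-- The all-ones sequence. -/
def ones : Cantor := fun _ => true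

lemma ones_eq : ones = cns true ones := by
  funext n; cases n <;> rfl

/-- The probe points `p k = 1^k 0 1^ω`. -/
def pm : ℕ → Cantor
  | 0 => cns false ones
  | k+1 => cns true (pm k)

lemma pm_self (k : ℕ) : pm k k = false := by
  induction k with
  | zero => rfl
  | succ k ih => simpa [pm] using ih

lemma pm_ne {k n : ℕ} (h : k ≠ n) : pm k n = true := by
  induction k generalizing n with
  | zero =>
    match n, h with
    | (n+1), _ => rfl
  | succ k ih =>
    match n with
    | 0 => rfl
    | (n+1) => exact ih (by omega)

lemma pm_inj {k m : ℕ} (h : pm k = pm m) : k = m := by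
  by_contra hne
  have h1 := pm_self k
  have h2 : pm m k = true := pm_ne (by omega : m ≠ k)
  rw [h] at h1
  rw [h1] at h2
  exact Bool.false_ne_true h2

lemma X_pm_ge {j k : ℕ} (h : j ≤ k) : X j (pm k) = pm (k+1) := by
  induction j generalizing k with
  | zero =>
    match k with
    | 0 =>
      show f0 (pm 0) = pm 1
      have : pm 0 = cns false (cns true ones) := by
        rw [pm]; conv_lhs => rw [ones_eq]
      rw [this]
      show f0 (cns false (cns true ones)) = cns true (cns false ones)
      simp
    | (k+1) =>
      show f0 (cns true (pm k)) = cns true (cns true (pm k))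
      simp
  | succ j ih =>
    match k, h with
    | (k+1), h =>
      show c1 (X j) (cns true (pm k)) = cns true (cns true (pm k))
      rw [c1_t, ih (by omega)]
      rfl

lemma X_pm_lt {j k : ℕ} (h : k < j) : X j (pm k) = pm k := by
  induction j generalizing k with
  | zero => omega
  | succ j ih =>
    match k with
    | 0 =>
      show c1 (X j) (cns false ones) = cns false ones
      simp
    | (k+1) =>
      show c1 (X j) (cns true (pm k)) = cns true (pm k)
      rw [c1_t, ih (by omega)]

/-- `X j` fixes any sequence with a `false` before position `j`. -/
lemma X_fix {j : ℕ} {s : Cantor} (h : ∃ k < j, s k = false) : X j s = s := by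
  induction j generalizing s with
  | zero => obtain ⟨k, hk, _⟩ := h; omega
  | succ j ih =>
    obtain ⟨k, hk, hs⟩ := h
    match k with
    | 0 =>
      have : s = cns false (tl s) := (eta' hs).symm
      rw [this]
      show c1 (X j) (cns false (tl s)) = cns false (tl s)
      simp
    | (k+1) =>
      rcases h0 : s 0 with _|_
      · rw [← eta' h0]
        show c1 (X j) (cns false (tl s)) = cns false (tl s)
        simp
      · rw [← eta' h0]
        show c1 (X j) (cns true (tl s)) = cns true (tl s)
        rw [c1_t, ih ⟨k, by omega, hs⟩]

lemma Xl_fix {u : List ℕ} {m : ℕ} (hu : ∀ j ∈ u, m ≤ j) {s : Cantor}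
    (h : ∃ k < m, s k = false) : Xl u s = s := by
  induction u with
  | nil => simp
  | cons j t ih =>
    rw [Xl_cons, Equiv.Perm.mul_apply, ih (fun i hi => hu i (by simp [hi]))]
    obtain ⟨k, hk, hs⟩ := h
    exact X_fix ⟨k, by have := hu j (by simp); omega, hs⟩

lemma Xl_pm (u : List ℕ) (k : ℕ) : ∃ c, k ≤ c ∧ Xl u (pm k) = pm c := by
  induction u with
  | nil => exact ⟨k, le_refl _, rfl⟩
  | cons j t ih =>
    obtain ⟨c, hc, he⟩ := ih
    rw [Xl_cons, Equiv.Perm.mul_apply, he]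
    by_cases h : j ≤ c
    · exact ⟨c+1, by omega, X_pm_ge h⟩
    · exact ⟨c, hc, X_pm_lt (by omega)⟩

/-- A nonempty sorted word moves the probe point of its minimum. -/
lemma Xl_moves (u : List ℕ) (m : ℕ) : Xl (u ++ [m]) (pm m) ≠ pm m := by
  rw [Xl_append, Equiv.Perm.mul_apply]
  have h1 : Xl [m] (pm m) = pm (m+1) := by
    simp [Equiv.Perm.mul_apply, X_pm_ge (le_refl m)]
  rw [h1]
  obtain ⟨c, hc, he⟩ := Xl_pm u (m+1)
  rw [he]
  intro hcon
  have := pm_inj hcon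
  omega

/-- Last element of a sorted list is its minimum. -/
lemma sorted_last_min {u : List ℕ} {m : ℕ} (h : Noninc (u ++ [m])) :
    ∀ j ∈ u ++ [m], m ≤ j := by
  intro j hj
  rcases List.mem_append.mp hj with hj | hj
  · have := List.pairwise_append.mp h
    exact this.2.2 j hj m (by simp)
  · simp at hj; omega

/-- Injectivity of the model on normal forms. -/
lemma Xl_inj : ∀ n : ℕ, ∀ u v : List ℕ, u.length + v.length ≤ n →
    Noninc u → Noninc v → Xl u = Xl v → u = v := by
  intro n
  induction n with
  | zero =>
    intro u v hlen _ _ _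
    have hu0 : u = [] := List.eq_nil_of_length_eq_zero (by omega)
    have hv0 : v = [] := List.eq_nil_of_length_eq_zero (by omega)
    rw [hu0, hv0]
  | succ n ih =>
    intro u v hlen hu hv he
    rcases List.eq_nil_or_concat u with rfl | ⟨u', mu, rfl⟩ <;>
      [skip; simp only [List.concat_eq_append] at hu hlen he ⊢]
    · rcases List.eq_nil_or_concat v with rfl | ⟨v', mv, rfl⟩ <;>
        [skip; simp only [List.concat_eq_append] at hv hlen he ⊢]
      · rfl
      · exfalso
        apply Xl_moves v' mv
        rw [← he]
        simp
    · rcases List.eq_nil_or_concat v with rfl | ⟨v', mv, rfl⟩ <;>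
        [skip; simp only [List.concat_eq_append] at hv hlen he ⊢]
      · exfalso
        apply Xl_moves u' mu
        rw [he]
        simp
      · -- both nonempty; first, the minima agree
        have hmm : mu = mv := by
          by_contra hne
          rcases Nat.lt_or_ge mu mv with hlt | hge
          · -- Xl v fixes pm mu but Xl u moves it
            have hfix : Xl (v' ++ [mv]) (pm mu) = pm mu :=
              Xl_fix (sorted_last_min hv) ⟨mu, hlt, pm_self mu⟩
            rw [← he] at hfix
            exact Xl_moves u' mu hfix
          · have hlt : mv < mu := by omega
            have hfix : Xl (u' ++ [mu]) (pm mv) = pm mv :=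
              Xl_fix (sorted_last_min hu) ⟨mv, hlt, pm_self mv⟩
            rw [he] at hfix
            exact Xl_moves v' mv hfix
        subst hmm
        have he' : Xl u' = Xl v' := by
          have h1 : Xl (u' ++ [mu]) = Xl u' * X mu := by
            rw [Xl_append]; simp
          have h2 : Xl (v' ++ [mu]) = Xl v' * X mu := by
            rw [Xl_append]; simp
          rw [h1, h2] at he
          exact mul_right_cancel he
        have hu' : Noninc u' := (List.pairwise_append.mp hu).1
        have hv' : Noninc v' := (List.pairwise_append.mp hv).1
        have : u' = v' := by
          apply ih u' v' _ hu' hv' he'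
          simp only [List.length_append, List.length_cons, List.length_nil] at hlen ⊢
          omega
        rw [this]

end ThompsonAux

namespace ThompsonAux

/-! ### The shift endomorphism -/

/-- Generator images for the shift endomorphism `Ξ : x i ↦ x (i+1)`. -/
def shiftf : Fin 2 → P := ![x 1, x 2]

lemma commute_aux (i : ℕ) (hi : 2 ≤ i) :
    Commute ((x 2)⁻¹ * x 1) (x (i+1)) := by
  have h1 : x 1 * x (i+1) * (x 1)⁻¹ = x (i+2) := rel 1 (i+1) (by omega)
  have h2 : x 2 * x (i+1) * (x 2)⁻¹ = x (i+2) := rel 2 (i+1) (by omega)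
  have : ((x 2)⁻¹ * x 1) * x (i+1) * ((x 2)⁻¹ * x 1)⁻¹ = x (i+1) := by
    calc ((x 2)⁻¹ * x 1) * x (i+1) * ((x 2)⁻¹ * x 1)⁻¹
        = (x 2)⁻¹ * (x 1 * x (i+1) * (x 1)⁻¹) * x 2 := by group
      _ = (x 2)⁻¹ * (x 2 * x (i+1) * (x 2)⁻¹) * x 2 := by rw [h1, h2]
      _ = x (i+1) := by group
  calc ((x 2)⁻¹ * x 1) * x (i+1)
      = (((x 2)⁻¹ * x 1) * x (i+1) * ((x 2)⁻¹ * x 1)⁻¹) * ((x 2)⁻¹ * x 1) := by group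
    _ = x (i+1) * ((x 2)⁻¹ * x 1) := by rw [this]

lemma shiftf_relators : ∀ r ∈ thompsonRels, (FreeGroup.lift shiftf) r = 1 := by
  intro r hr
  have e0 : (FreeGroup.lift shiftf) (FreeGroup.of (0 : Fin 2)) = x 1 := by
    simp [shiftf]
  have e1 : (FreeGroup.lift shiftf) (FreeGroup.of (1 : Fin 2)) = x 2 := by
    simp [shiftf]
  rcases hr with h | h
  · subst h
    rw [map_commutatorElement, map_mul, map_inv, map_mul, map_mul, map_inv, e0, e1]
    rw [commutatorElement_eq_one_iff_commute]
    rw [rel 1 2 (by omega)]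
    exact commute_aux 2 (by omega)
  · rw [Set.mem_singleton_iff] at h
    subst h
    rw [map_commutatorElement, map_mul, map_inv, map_mul, map_mul, map_inv, map_pow, e0, e1]
    rw [commutatorElement_eq_one_iff_commute]
    have h3 : x 1 ^ 2 * x 2 * (x 1 ^ 2)⁻¹ = x 4 := by
      have ha : x 1 * x 2 * (x 1)⁻¹ = x 3 := rel 1 2 (by omega)
      have hb : x 1 * x 3 * (x 1)⁻¹ = x 4 := rel 1 3 (by omega)
      calc x 1 ^ 2 * x 2 * (x 1 ^ 2)⁻¹
          = x 1 * (x 1 * x 2 * (x 1)⁻¹) * (x 1)⁻¹ := by rw [sq]; group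
        _ = x 4 := by rw [ha, hb]
    rw [h3]
    exact commute_aux 3 (by omega)

/-- The shift endomorphism of `P`. -/
def Ξ : P →* P := PresentedGroup.toGroup shiftf_relators

@[simp] lemma Ξ_a : Ξ a = x 1 := PresentedGroup.toGroup.of shiftf_relators
@[simp] lemma Ξ_b : Ξ b = x 2 := PresentedGroup.toGroup.of shiftf_relators

@[simp] lemma Ξ_x (n : ℕ) : Ξ (x n) = x (n+1) := by
  induction n using Nat.strong_induction_on with
  | _ n ih =>
    match n with
    | 0 => exact Ξ_a
    | 1 => exact Ξ_b
    | (m+2) =>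
      show Ξ (a * x (m+1) * a⁻¹) = x (m+3)
      rw [map_mul, map_mul, map_inv, Ξ_a, ih (m+1) (by omega)]
      exact rel 1 (m+2) (by omega)

lemma Ξ_Pl (l : List ℕ) : Ξ (Pl l) = Pl (l.map (· + 1)) := by
  induction l with
  | nil => simp
  | cons j t ih => simp [ih]

/-! ### Binary trees -/

end ThompsonAux

inductive BT where
  | leaf : BT
  | node : BT → BT → BT
deriving DecidableEq

namespace ThompsonAux
open BT

namespace BTx

/-- Number of leaves. -/
def nl : BT → ℕ
  | .leaf => 1
  | .node L R => nl L + nl R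

lemma nl_pos (T : BT) : 1 ≤ nl T := by
  induction T with
  | leaf => exact le_refl 1
  | node L R ihL ihR => simp [nl]; omega

def sz : BT → ℕ
  | .leaf => 1
  | .node L R => sz L + sz R + 1

def leftSz : BT → ℕ
  | .leaf => 0
  | .node L _ => sz L

/-- The positive word associated to a tree, by right-rotation recursion. -/
def wordOf : BT → List ℕ
  | .leaf => []
  | .node .leaf R => (wordOf R).map (· + 1)
  | .node (.node L0 L1) R => wordOf (.node L0 (.node L1 R)) ++ [0]
termination_by t => (sz t, leftSz t)
decreasing_by
  · simp [sz, leftSz]; omega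
  · simp [sz, leftSz]; omega

/-- Splitting the `k`-th leaf. -/
def addCaret : BT → ℕ → BT
  | .leaf, _ => .node .leaf .leaf
  | .node L R, k =>
    if k < nl L then .node (addCaret L k) R else .node L (addCaret R (k - nl L))

lemma nl_addCaret (T : BT) (k : ℕ) : nl (addCaret T k) = nl T + 1 := by
  induction T generalizing k with
  | leaf => simp [addCaret, nl]
  | node L R ihL ihR =>
    by_cases h : k < nl L
    · simp [addCaret, if_pos h, nl, ihL]; omega
    · simp [addCaret, if_neg h, nl, ihR]; omega

/-- Adding a caret at the last leaf = right extension. -/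
def rext : BT → BT
  | .leaf => .node .leaf .leaf
  | .node L R => .node L (rext R)

lemma addCaret_last (T : BT) : addCaret T (nl T - 1) = rext T := by
  induction T with
  | leaf => rfl
  | node L R ihL ihR =>
    have hR := nl_pos R
    have hL := nl_pos L
    have h : ¬ (nl (.node L R) - 1 < nl L) := by simp [nl]; omega
    rw [show addCaret (.node L R) (nl (.node L R) - 1)
        = .node L (addCaret R (nl (.node L R) - 1 - nl L)) by
      simp only [addCaret, if_neg h]]
    rw [show nl (.node L R) - 1 - nl L = nl R - 1 by simp [nl]; omega, ihR]
    rfl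

lemma wordOf_leaf : wordOf .leaf = [] := by rw [wordOf]
lemma wordOf_nodeLeaf (R : BT) : wordOf (.node .leaf R) = (wordOf R).map (· + 1) := by
  rw [wordOf]
lemma wordOf_rot (L0 L1 R : BT) :
    wordOf (.node (.node L0 L1) R) = wordOf (.node L0 (.node L1 R)) ++ [0] := by
  rw [wordOf]

lemma wordOf_rext (T : BT) : wordOf (rext T) = wordOf T := by
  induction T using wordOf.induct with
  | case1 =>
    show wordOf (.node .leaf .leaf) = wordOf .leaf
    simp [wordOf_nodeLeaf, wordOf_leaf]
  | case2 R ih =>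
    show wordOf (.node .leaf (rext R)) = wordOf (.node .leaf R)
    simp only [wordOf_nodeLeaf, ih]
  | case3 L0 L1 R ih =>
    show wordOf (.node (.node L0 L1) (rext R)) = wordOf (.node (.node L0 L1) R)
    have ih' : wordOf (.node L0 (.node L1 (rext R))) = wordOf (.node L0 (.node L1 R)) := ih
    calc wordOf (.node (.node L0 L1) (rext R))
        = wordOf (.node L0 (.node L1 (rext R))) ++ [0] := wordOf_rot _ _ _
      _ = wordOf (.node L0 (.node L1 R)) ++ [0] := by rw [ih']
      _ = wordOf (.node (.node L0 L1) R) := (wordOf_rot _ _ _).symm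

/-- `a`-conjugation shifts words with positive entries. -/
lemma a_conj_Pl (l : List ℕ) (h : ∀ i ∈ l, 1 ≤ i) :
    a * Pl l * a⁻¹ = Pl (l.map (· + 1)) := by
  induction l with
  | nil => simp
  | cons j t ih =>
    have hj : 1 ≤ j := h j (by simp)
    have e : a * x j * a⁻¹ = x (j+1) := rel 0 j (by omega)
    calc a * Pl (j :: t) * a⁻¹ = (a * x j * a⁻¹) * (a * Pl t * a⁻¹) := by
          simp [mul_assoc]
      _ = x (j+1) * Pl (t.map (· + 1)) := by rw [e, ih (fun i hi => h i (by simp [hi]))]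
      _ = Pl ((j :: t).map (· + 1)) := by simp

/-- The key structural identity: splitting leaf `k` multiplies the word by `x k` on the left,
provided `k` is not the last leaf. -/
lemma F1 : ∀ T : BT, ∀ k : ℕ, k + 1 < nl T →
    Pl (wordOf (addCaret T k)) = x k * Pl (wordOf T) := by
  intro T
  induction T using wordOf.induct with
  | case1 =>
    intro k hk
    simp [nl] at hk
  | case2 R ih =>
    intro k hk
    match k with
    | 0 =>
      have hmem : ∀ i ∈ (wordOf R).map (· + 1), 1 ≤ i := by
        intro i hi
        simp at hi
        omega
      have key : Pl (wordOf (.node (.node .leaf .leaf) R))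
          = Pl (((wordOf R).map (· + 1)).map (· + 1)) * a := by
        rw [wordOf_rot, Pl_append, wordOf_nodeLeaf, wordOf_nodeLeaf]
        have h0 : Pl [0] = a := by
          show x 0 * 1 = a
          simp only [mul_one]
          rfl
        rw [h0]
      show Pl (wordOf (.node (.node .leaf .leaf) R)) = x 0 * Pl (wordOf (.node .leaf R))
      rw [key, wordOf_nodeLeaf, ← a_conj_Pl _ hmem]
      show a * Pl ((wordOf R).map (· + 1)) * a⁻¹ * a = a * Pl ((wordOf R).map (· + 1))
      group
    | (k'+1) =>
      have h1 : ¬ (k' + 1 < nl BT.leaf) := by simp [nl]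
      show Pl (wordOf (addCaret (.node .leaf R) (k'+1))) = _
      rw [show addCaret (.node .leaf R) (k'+1) = .node .leaf (addCaret R (k'+1-1)) by
        simp only [addCaret, if_neg h1]; rfl]
      have hk' : k' + 1 < nl R := by
        have : nl (BT.node .leaf R) = 1 + nl R := by simp [nl]
        omega
      rw [wordOf_nodeLeaf, wordOf_nodeLeaf]
      rw [← Ξ_Pl, ← Ξ_Pl, Nat.add_sub_cancel, ih k' hk', map_mul, Ξ_x]
  | case3 L0 L1 R ih =>
    intro k hk
    have hnl : nl (BT.node (BT.node L0 L1) R) = nl L0 + nl L1 + nl R := by simp [nl]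
    have hnl' : nl (BT.node L0 (BT.node L1 R)) = nl L0 + nl L1 + nl R := by simp [nl]; omega
    -- rotated tree shapes
    obtain ⟨A, B, C, h1, h2⟩ : ∃ A B C,
        addCaret (.node (.node L0 L1) R) k = .node (.node A B) C ∧
        addCaret (.node L0 (.node L1 R)) k = .node A (.node B C) := by
      by_cases hc1 : k < nl L0
      · refine ⟨addCaret L0 k, L1, R, ?_, ?_⟩
        · have : k < nl (BT.node L0 L1) := by simp [nl]; omega
          simp only [addCaret, if_pos this, if_pos hc1]
        · simp only [addCaret, if_pos hc1]
      · by_cases hc2 : k < nl L0 + nl L1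
        · refine ⟨L0, addCaret L1 (k - nl L0), R, ?_, ?_⟩
          · have h' : k < nl (BT.node L0 L1) := by simp [nl]; omega
            have h'' : ¬ (k < nl L0) := hc1
            simp only [addCaret, if_pos h', if_neg h'']
          · have h'' : ¬ (k < nl L0) := hc1
            have h3 : k - nl L0 < nl L1 := by omega
            simp only [addCaret, if_neg h'', if_pos h3]
        · refine ⟨L0, L1, addCaret R (k - nl L0 - nl L1), ?_, ?_⟩
          · have h' : ¬ (k < nl (BT.node L0 L1)) := by simp [nl]; omega
            simp only [addCaret, if_neg h']
            have : k - nl (BT.node L0 L1) = k - nl L0 - nl L1 := by simp [nl]; omega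
            rw [this]
          · have h'' : ¬ (k < nl L0) := hc1
            have h3 : ¬ (k - nl L0 < nl L1) := by omega
            simp only [addCaret, if_neg h'', if_neg h3]
    rw [h1, wordOf_rot]
    have e2 : Pl (wordOf (.node A (.node B C))) = x k * Pl (wordOf (.node L0 (.node L1 R))) := by
      rw [← h2]
      exact ih k (by omega)
    rw [Pl_append, e2, wordOf_rot, Pl_append]
    group

end BTx

end ThompsonAux

namespace ThompsonAux
namespace BTx

/-- Subtree (prefix) relation on trees. -/
inductive Sub : BT → BT → Prop
  | leaf (T : BT) : Sub .leaf T
  | node {A B C D : BT} : Sub A C → Sub B D → Sub (.node A B) (.node C D)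

/-- Common refinement. -/
def un : BT → BT → BT
  | .leaf, T => T
  | .node A B, .leaf => .node A B
  | .node A B, .node C D => .node (un A C) (un B D)

lemma sub_refl (T : BT) : Sub T T := by
  induction T with
  | leaf => exact Sub.leaf _
  | node A B ihA ihB => exact Sub.node ihA ihB

lemma sub_un_left (A B : BT) : Sub A (un A B) := by
  induction A generalizing B with
  | leaf => exact Sub.leaf _
  | node A0 A1 ih0 ih1 =>
    cases B with
    | leaf => exact sub_refl _
    | node C D => exact Sub.node (ih0 C) (ih1 D)

lemma sub_un_right (A B : BT) : Sub B (un A B) := by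
  induction A generalizing B with
  | leaf => exact sub_refl _
  | node A0 A1 ih0 ih1 =>
    cases B with
    | leaf => exact Sub.leaf _
    | node C D => exact Sub.node (ih0 C) (ih1 D)

lemma sub_nl_le {A U : BT} (h : Sub A U) : nl A ≤ nl U := by
  induction h with
  | leaf T => simpa [nl] using nl_pos T
  | node h1 h2 ih1 ih2 => simp [nl]; omega

lemma sub_eq_of_nl {A U : BT} (h : Sub A U) (hn : nl U ≤ nl A) : A = U := by
  induction h with
  | leaf T =>
    cases T with
    | leaf => rfl
    | node C D =>
      exfalso
      have := nl_pos C
      have := nl_pos D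
      simp [nl] at hn
      omega
  | node h1 h2 ih1 ih2 =>
    rename_i A B C D
    have l1 := sub_nl_le h1
    have l2 := sub_nl_le h2
    simp [nl] at hn
    rw [ih1 (by omega), ih2 (by omega)]

lemma sub_step {A U : BT} (h : Sub A U) (hne : A ≠ U) :
    ∃ k, k < nl A ∧ Sub (addCaret A k) U := by
  induction h with
  | leaf T =>
    cases T with
    | leaf => exact absurd rfl hne
    | node C D =>
      refine ⟨0, by simp [nl], ?_⟩
      show Sub (.node .leaf .leaf) (.node C D)
      exact Sub.node (Sub.leaf C) (Sub.leaf D)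
  | node h1 h2 ih1 ih2 =>
    rename_i A B C D
    by_cases hAC : A = C
    · subst hAC
      have hBD : B ≠ D := by
        intro hBD; apply hne; rw [hBD]
      obtain ⟨k, hk, hsub⟩ := ih2 hBD
      refine ⟨nl A + k, by simp [nl]; omega, ?_⟩
      have hcond : ¬ (nl A + k < nl A) := by omega
      show Sub (addCaret (.node A B) (nl A + k)) (.node A D)
      rw [show addCaret (.node A B) (nl A + k) = .node A (addCaret B (nl A + k - nl A)) by
        simp only [addCaret, if_neg hcond]]
      rw [show nl A + k - nl A = k by omega]
      exact Sub.node h1 hsub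
    · obtain ⟨k, hk, hsub⟩ := ih1 hAC
      refine ⟨k, by simp [nl]; omega, ?_⟩
      show Sub (addCaret (.node A B) k) (.node C D)
      rw [show addCaret (.node A B) k = .node (addCaret A k) B by
        simp only [addCaret, if_pos hk]]
      exact Sub.node hsub h2

lemma F2 : ∀ n : ℕ, ∀ A U : BT, nl U ≤ nl A + n → Sub A U →
    ∃ w : List ℕ, Pl (wordOf U) = Pl w * Pl (wordOf A) := by
  intro n
  induction n with
  | zero =>
    intro A U hn h
    rw [sub_eq_of_nl h (by omega)]
    exact ⟨[], by simp⟩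
  | succ n ih =>
    intro A U hn h
    by_cases he : A = U
    · rw [he]; exact ⟨[], by simp⟩
    · obtain ⟨k, hk, hsub⟩ := sub_step h he
      have hnl : nl (addCaret A k) = nl A + 1 := nl_addCaret A k
      obtain ⟨w', hw'⟩ := ih (addCaret A k) U (by omega) hsub
      by_cases hlast : k + 1 < nl A
      · refine ⟨w' ++ [k], ?_⟩
        rw [hw', F1 A k hlast, Pl_append]
        have hx : Pl [k] = x k := by simp
        rw [hx]
        group
      · -- k is the last leaf: the word is unchanged
        have hkeq : k = nl A - 1 := by have := nl_pos A; omega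
        have : addCaret A k = rext A := by rw [hkeq]; exact addCaret_last A
        rw [this, wordOf_rext] at hw'
        exact ⟨w', hw'⟩

/-- Right-padding. -/
def padTo : BT → ℕ → BT
  | T, 0 => T
  | T, (m+1) => rext (padTo T m)

lemma nl_rext (T : BT) : nl (rext T) = nl T + 1 := by
  induction T with
  | leaf => rfl
  | node L R ihL ihR => simp [rext, nl, ihR]; omega

lemma nl_padTo (T : BT) (m : ℕ) : nl (padTo T m) = nl T + m := by
  induction m with
  | zero => rfl
  | succ m ih => simp [padTo, nl_rext, ih]; omega

lemma wordOf_padTo (T : BT) (m : ℕ) : wordOf (padTo T m) = wordOf T := by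
  induction m with
  | zero => rfl
  | succ m ih => simp [padTo, wordOf_rext, ih]

/-- Every positive word is realized by a tree. -/
lemma exists_tree (u : List ℕ) : ∃ T : BT, Pl (wordOf T) = Pl u := by
  induction u with
  | nil => exact ⟨.leaf, by rw [wordOf_leaf]⟩
  | cons k t ih =>
    obtain ⟨T', hT'⟩ := ih
    set T'' := padTo T' (k+2) with hT''def
    have hnl : k + 1 < nl T'' := by
      rw [hT''def, nl_padTo]
      have := nl_pos T'
      omega
    refine ⟨addCaret T'' k, ?_⟩
    rw [F1 T'' k hnl, hT''def, wordOf_padTo, hT', Pl_cons]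

/-- Any two positive words have a common left multiple. -/
lemma common_left (u v : List ℕ) : ∃ w₁ w₂ : List ℕ, Pl w₁ * Pl u = Pl w₂ * Pl v := by
  obtain ⟨Tu, hTu⟩ := exists_tree u
  obtain ⟨Tv, hTv⟩ := exists_tree v
  set U := un Tu Tv
  obtain ⟨w₁, hw₁⟩ := F2 (nl U) Tu U (by have := nl_pos Tu; omega) (sub_un_left Tu Tv)
  obtain ⟨w₂, hw₂⟩ := F2 (nl U) Tv U (by have := nl_pos Tv; omega) (sub_un_right Tu Tv)
  refine ⟨w₁, w₂, ?_⟩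
  rw [← hTu, ← hTv, ← hw₁, ← hw₂]

end BTx

/-- Every element of `P` is a fraction `(Pl u)⁻¹ * Pl v`. -/
lemma exists_frac (g : P) : ∃ u v : List ℕ, g = (Pl u)⁻¹ * Pl v := by
  let S : Subgroup P :=
    { carrier := {g | ∃ u v : List ℕ, g = (Pl u)⁻¹ * Pl v}
      one_mem' := ⟨[], [], by simp⟩
      mul_mem' := by
        rintro g h ⟨u, v, rfl⟩ ⟨s, t, rfl⟩
        obtain ⟨w₁, w₂, hw⟩ := BTx.common_left v s
        have hmid : Pl v * (Pl s)⁻¹ = (Pl w₁)⁻¹ * Pl w₂ := by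
          calc Pl v * (Pl s)⁻¹ = (Pl w₁)⁻¹ * (Pl w₁ * Pl v) * (Pl s)⁻¹ := by group
            _ = (Pl w₁)⁻¹ * (Pl w₂ * Pl s) * (Pl s)⁻¹ := by rw [hw]
            _ = (Pl w₁)⁻¹ * Pl w₂ := by group
        refine ⟨w₁ ++ u, w₂ ++ t, ?_⟩
        rw [Pl_append, Pl_append]
        calc (Pl u)⁻¹ * Pl v * ((Pl s)⁻¹ * Pl t)
            = (Pl u)⁻¹ * (Pl v * (Pl s)⁻¹) * Pl t := by group
          _ = (Pl u)⁻¹ * ((Pl w₁)⁻¹ * Pl w₂) * Pl t := by rw [hmid]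
          _ = (Pl w₁ * Pl u)⁻¹ * (Pl w₂ * Pl t) := by group
      inv_mem' := by
        rintro g ⟨u, v, rfl⟩
        exact ⟨v, u, by group⟩ }
  have htop : Subgroup.closure (Set.range (PresentedGroup.of :
      Fin 2 → P)) = ⊤ := PresentedGroup.closure_range_of _
  have hsub : Subgroup.closure (Set.range (PresentedGroup.of : Fin 2 → P)) ≤ S := by
    rw [Subgroup.closure_le]
    rintro g ⟨i, rfl⟩
    fin_cases i
    · exact ⟨[], [0], by simp; rfl⟩
    · exact ⟨[], [1], by simp; rfl⟩
  have : (⊤ : Subgroup P) ≤ S := htop ▸ hsub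
  exact this (Subgroup.mem_top g)

/-- Faithfulness of the model representation. -/
lemma ρ_injective : Function.Injective ρ := by
  rw [← MonoidHom.ker_eq_bot_iff]
  rw [eq_bot_iff]
  intro g hg
  obtain ⟨u, v, rfl⟩ := exists_frac g
  have h1 : ρ ((Pl u)⁻¹ * Pl v) = 1 := hg
  rw [map_mul, map_inv, ρ_Pl, ρ_Pl] at h1
  have h2 : Xl u = Xl v := by
    have := h1
    rw [inv_mul_eq_one] at this
    exact this
  have h3 : Xl (NF u) = Xl (NF v) := by
    have eu : Xl (NF u) = Xl u := by rw [← ρ_Pl, ← ρ_Pl, Pl_NF]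
    have ev : Xl (NF v) = Xl v := by rw [← ρ_Pl, ← ρ_Pl, Pl_NF]
    rw [eu, ev, h2]
  have h4 : NF u = NF v :=
    Xl_inj ((NF u).length + (NF v).length) (NF u) (NF v) (le_refl _)
      (NF_sorted u) (NF_sorted v) h3
  have h5 : Pl u = Pl v := by
    rw [← Pl_NF u, ← Pl_NF v, h4]
  rw [Subgroup.mem_bot, h5]
  group

end ThompsonAux

namespace ThompsonAux

/-! ### Continuity and moved cylinders -/

def agree (m : ℕ) (s t : Cantor) : Prop := ∀ k, k < m → s k = t k

lemma agree_mono {m m' : ℕ} (h : m ≤ m') {s t : Cantor} (ha : agree m' s t) :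
    agree m s t := fun k hk => ha k (lt_of_lt_of_le hk h)

lemma agree_cns {d : ℕ} {s t : Cantor} (b : Bool) (h : agree d s t) :
    agree (d+1) (cns b s) (cns b t) := by
  intro k hk
  cases k with
  | zero => rfl
  | succ k => exact h k (by omega)

lemma agree_tl {d : ℕ} {s t : Cantor} (h : agree (d+1) s t) : agree d (tl s) (tl t) :=
  fun k hk => h (k+1) (by omega)

/-- Uniform continuity of a function on Cantor space. -/
def LipF (p : Cantor → Cantor) : Prop :=
  ∀ d, ∃ m, ∀ s t, agree m s t → agree d (p s) (p t)

lemma lipF_id : LipF id := fun d => ⟨d, fun _ _ h => h⟩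

lemma lipF_comp {p q : Cantor → Cantor} (hp : LipF p) (hq : LipF q) :
    LipF (p ∘ q) := by
  intro d
  obtain ⟨m₁, h₁⟩ := hp d
  obtain ⟨m₂, h₂⟩ := hq m₁
  exact ⟨m₂, fun s t h => h₁ _ _ (h₂ _ _ h)⟩

lemma lipF_f0 : LipF f0 := by
  intro d
  refine ⟨d + 2, fun s t h => ?_⟩
  have h0 : s 0 = t 0 := h 0 (by omega)
  have h1 : s 1 = t 1 := h 1 (by omega)
  have htl : agree (d+1) (tl s) (tl t) := agree_tl (agree_mono (by omega) h)
  have htl2 : agree d (tl (tl s)) (tl (tl t)) := agree_tl htl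
  rcases hs0 : s 0 with _|_ <;> rcases hs1 : s 1 with _|_ <;>
    simp only [f0, hs0, hs1, ← h0, ← h1, hs0, hs1, if_true, if_false, Bool.false_eq_true] <;>
    first
      | exact agree_mono (by omega) (agree_cns _ htl2)
      | exact agree_mono (by omega) (agree_cns _ (agree_cns _ htl2))
      | exact agree_mono (by omega) (agree_cns _ (agree_cns _ htl))

lemma lipF_g0 : LipF g0 := by
  intro d
  refine ⟨d + 2, fun s t h => ?_⟩
  have h0 : s 0 = t 0 := h 0 (by omega)
  have h1 : s 1 = t 1 := h 1 (by omega)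
  have htl : agree (d+1) (tl s) (tl t) := agree_tl (agree_mono (by omega) h)
  have htl2 : agree d (tl (tl s)) (tl (tl t)) := agree_tl htl
  rcases hs0 : s 0 with _|_ <;> rcases hs1 : s 1 with _|_ <;>
    simp only [g0, hs0, hs1, ← h0, ← h1, if_true, if_false, Bool.false_eq_true] <;>
    first
      | exact agree_mono (by omega) (agree_cns _ htl2)
      | exact agree_mono (by omega) (agree_cns _ (agree_cns _ htl2))
      | exact agree_mono (by omega) (agree_cns _ (agree_cns _ htl))

lemma lipF_c1 {p : Equiv.Perm Cantor} (hp : LipF p) : LipF (c1 p) := by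
  intro d
  obtain ⟨m, hm⟩ := hp d
  refine ⟨max (m + 1) (d + 1), fun s t h => ?_⟩
  have h0 : s 0 = t 0 := h 0 (by omega)
  rcases hs0 : s 0 with _|_
  · have : c1 p s = s := by
      rw [← eta' hs0]; simp
    have ht0 : t 0 = false := by rw [← h0, hs0]
    have h2 : c1 p t = t := by
      rw [← eta' ht0]; simp
    rw [this, h2]
    exact agree_mono (by omega) h
  · have ht0 : t 0 = true := by rw [← h0, hs0]
    have e1 : c1 p s = cns true (p (tl s)) := by rw [← eta' hs0]; simp
    have e2 : c1 p t = cns true (p (tl t)) := by rw [← eta' ht0]; simp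
    rw [e1, e2]
    have : agree m (tl s) (tl t) := agree_tl (agree_mono (by omega) h)
    have hd : agree d (p (tl s)) (p (tl t)) := hm _ _ this
    exact agree_mono (by omega) (agree_cns _ hd)

/-- Every element of the image of `ρ` is uniformly continuous in both directions. -/
lemma lip_ρ (g : P) : LipF (ρ g) ∧ LipF (ρ g⁻¹) := by
  let S : Subgroup P :=
    { carrier := {g | LipF (ρ g) ∧ LipF (ρ g⁻¹)}
      one_mem' := by constructor <;> simpa using lipF_id
      mul_mem' := by
        rintro p q ⟨hp1, hp2⟩ ⟨hq1, hq2⟩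
        constructor
        · have : (ρ (p * q) : Cantor → Cantor) = (ρ p : Cantor → Cantor) ∘ (ρ q) := by
            funext z; simp [Equiv.Perm.mul_apply]
          rw [this]; exact lipF_comp hp1 hq1
        · have : (ρ (p * q)⁻¹ : Cantor → Cantor) = (ρ q⁻¹ : Cantor → Cantor) ∘ (ρ p⁻¹) := by
            funext z; simp [Equiv.Perm.mul_apply]
          rw [this]; exact lipF_comp hq2 hp2
      inv_mem' := by
        rintro p ⟨hp1, hp2⟩
        refine ⟨hp2, ?_⟩
        simpa using hp1 }
  have htop : Subgroup.closure (Set.range (PresentedGroup.of :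
      Fin 2 → P)) = ⊤ := PresentedGroup.closure_range_of _
  have hX1 : LipF (X 1) := lipF_c1 lipF_f0
  have hX1inv : LipF ((X 1)⁻¹ : Equiv.Perm Cantor) := by
    have : ((X 1)⁻¹ : Equiv.Perm Cantor) = c1 (X0⁻¹) := by
      show (c1 X0)⁻¹ = c1 X0⁻¹
      rw [c1_inv]
    rw [this]
    exact lipF_c1 lipF_g0
  have hsub : Subgroup.closure (Set.range (PresentedGroup.of : Fin 2 → P)) ≤ S := by
    rw [Subgroup.closure_le]
    rintro g ⟨i, rfl⟩
    fin_cases i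
    · refine ⟨?_, ?_⟩
      · show LipF (ρ a); rw [ρ_a]; exact lipF_f0
      · show LipF (ρ a⁻¹)
        rw [map_inv, ρ_a]
        exact lipF_g0
    · refine ⟨?_, ?_⟩
      · show LipF (ρ b); rw [ρ_b]; exact hX1
      · show LipF (ρ b⁻¹)
        rw [map_inv, ρ_b]
        exact hX1inv
  have hmem : g ∈ S := by
    have : (⊤ : Subgroup P) ≤ S := htop ▸ hsub
    exact this (Subgroup.mem_top g)
  exact hmem

/-- Prefix of a sequence as prepended list. -/
def app (β : List Bool) (s : Cantor) : Cantor := β.foldr cns s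

@[simp] lemma app_nil (s : Cantor) : app [] s = s := rfl
@[simp] lemma app_cons (b : Bool) (β : List Bool) (s : Cantor) :
    app (b :: β) s = cns b (app β s) := rfl

lemma app_append (β γ : List Bool) (s : Cantor) :
    app (β ++ γ) s = app β (app γ s) := by
  induction β with
  | nil => rfl
  | cons b β ih => simp [ih]

lemma app_add (β : List Bool) (s : Cantor) (j : ℕ) :
    app β s (β.length + j) = s j := by
  induction β generalizing j with
  | nil => simp
  | cons b β ih =>
    have hidx : (b::β).length + j = (β.length + j) + 1 := by simp; omega
    rw [hidx]
    show cns b (app β s) ((β.length + j) + 1) = s j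
    rw [cns_succ]
    exact ih j

lemma app_lt (β : List Bool) (s t : Cantor) (k : ℕ) (hk : k < β.length) :
    app β s k = app β t k := by
  induction β generalizing k with
  | nil => simp at hk
  | cons b β ih =>
    cases k with
    | zero => rfl
    | succ k =>
      show cns b (app β s) (k+1) = cns b (app β t) (k+1)
      rw [cns_succ, cns_succ]
      exact ih k (by simpa using hk)

lemma app_prefix_val (s₀ : Cantor) (m : ℕ) (s : Cantor) (k : ℕ) (hk : k < m) :
    app ((List.range m).map s₀) s k = s₀ k := by
  induction m generalizing s with
  | zero => omega
  | succ m ih =>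
    rw [List.range_succ, List.map_append]
    rw [app_append]
    rcases Nat.lt_or_ge k m with h | h
    · rw [ih _ h]
    · have hkm : k = m := by omega
      subst hkm
      have hl : ((List.range k).map s₀).length = k := by simp
      show app ((List.range k).map s₀) (app [s₀ k] s) k = s₀ k
      have := app_add ((List.range k).map s₀) (app [s₀ k] s) 0
      rw [hl] at this
      simpa using this

/-- If `ρ n ≠ 1` then some cylinder is moved completely off itself. -/
lemma exists_moved_cyl {n : P} (hn : ρ n ≠ 1) :
    ∃ β : List Bool, ∀ s t : Cantor, ρ n (app β s) ≠ app β t := by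
  obtain ⟨hl, _⟩ := lip_ρ n
  have : ∃ s₀, ρ n s₀ ≠ s₀ := by
    by_contra hc
    push_neg at hc
    apply hn
    apply Equiv.ext
    intro z
    exact hc z
  obtain ⟨s₀, hs₀⟩ := this
  have : ∃ d, ρ n s₀ d ≠ s₀ d := by
    by_contra hc
    push_neg at hc
    exact hs₀ (funext hc)
  obtain ⟨d, hd⟩ := this
  obtain ⟨m₀, hm₀⟩ := hl (d+1)
  set m := max m₀ (d+1) with hm
  refine ⟨(List.range m).map s₀, fun s t heq => ?_⟩
  have hagree : agree m₀ (app ((List.range m).map s₀) s) s₀ := by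
    intro k hk
    rw [app_prefix_val s₀ m s k (by omega)]
  have h1 : ρ n (app ((List.range m).map s₀) s) d = ρ n s₀ d :=
    hm₀ _ _ hagree d (by omega)
  have h2 : app ((List.range m).map s₀) t d = s₀ d :=
    app_prefix_val s₀ m t d (by omega)
  rw [heq, h2] at h1
  exact hd h1.symm

end ThompsonAux

namespace ThompsonAux

/-! ### Copy endomorphisms and navigation -/

/-- `c1` as a monoid hom. -/
def c1hom : Equiv.Perm Cantor →* Equiv.Perm Cantor := MonoidHom.mk' c1 c1_mul
/-- `c0` as a monoid hom. -/
def c0hom : Equiv.Perm Cantor →* Equiv.Perm Cantor := MonoidHom.mk' c0 c0_mul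

@[simp] lemma c1hom_apply (p : Equiv.Perm Cantor) : c1hom p = c1 p := rfl
@[simp] lemma c0hom_apply (p : Equiv.Perm Cantor) : c0hom p = c0 p := rfl

lemma ρ_Ξ (g : P) : ρ (Ξ g) = c1 (ρ g) := by
  have h : ρ.comp Ξ = c1hom.comp ρ := by
    apply PresentedGroup.ext
    intro i
    fin_cases i
    · show ρ (Ξ a) = c1hom (ρ a)
      rw [Ξ_a, ρ_a]
      rfl
    · show ρ (Ξ b) = c1hom (ρ b)
      rw [Ξ_b, ρ_b]
      have : ρ (x 2) = X 2 := ρ_x 2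
      rw [this]
      rfl
  have := congrArg (fun ψ => ψ g) h
  simpa using this

/-- Extra action lemmas for inverses. -/
lemma X0_apply (z : Cantor) : X 0 z = f0 z := rfl
lemma X0_inv_apply (z : Cantor) : (X 0)⁻¹ z = g0 z := rfl

@[simp] lemma X_zero_tt (s : Cantor) : X 0 (cns true s) = cns true (cns true s) := f0_tt s
@[simp] lemma X_zero_ff (s : Cantor) : X 0 (cns false (cns false s)) = cns false s := f0_ff s
@[simp] lemma X_zero_ft (s : Cantor) : X 0 (cns false (cns true s)) = cns true (cns false s) := f0_ft s
@[simp] lemma X_zero_inv_f (s : Cantor) : (X 0)⁻¹ (cns false s) = cns false (cns false s) := g0_f s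
@[simp] lemma X_zero_inv_tf (s : Cantor) :
    (X 0)⁻¹ (cns true (cns false s)) = cns false (cns true s) := g0_tf s
@[simp] lemma X_zero_inv_tt (s : Cantor) :
    (X 0)⁻¹ (cns true (cns true s)) = cns true s := g0_tt s

@[simp] lemma X0_tt' (s : Cantor) : X0 (cns true s) = cns true (cns true s) := f0_tt s
@[simp] lemma X0_ff' (s : Cantor) : X0 (cns false (cns false s)) = cns false s := f0_ff s
@[simp] lemma X0_ft' (s : Cantor) : X0 (cns false (cns true s)) = cns true (cns false s) := f0_ft s
@[simp] lemma X0_inv_f' (s : Cantor) : X0⁻¹ (cns false s) = cns false (cns false s) := g0_f s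
@[simp] lemma X0_inv_tf' (s : Cantor) :
    X0⁻¹ (cns true (cns false s)) = cns false (cns true s) := g0_tf s
@[simp] lemma X0_inv_tt' (s : Cantor) :
    X0⁻¹ (cns true (cns true s)) = cns true s := g0_tt s

@[simp] lemma c1_inv_simp (p : Equiv.Perm Cantor) : (c1 p)⁻¹ = c1 p⁻¹ := (c1_inv p).symm
@[simp] lemma c0_inv_simp (p : Equiv.Perm Cantor) : (c0 p)⁻¹ = c0 p⁻¹ := (c0_inv p).symm

/-- Words whose copies sit inside `C₀`. -/
def lam : ℕ → P
  | 0 => a⁻¹ * b⁻¹ * a * a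
  | n+1 => a⁻¹ * Ξ (lam n) * a

lemma ρ_lam0 : ρ (lam 0) = c0 X0 := by
  have e : ρ (lam 0) = (X 0)⁻¹ * (X 1)⁻¹ * X 0 * X 0 := by
    show ρ (a⁻¹ * b⁻¹ * a * a) = _
    rw [map_mul, map_mul, map_mul, map_inv, map_inv, ρ_a, ρ_b]
  rw [e]
  apply perm_ext
  intro s
  simp only [Equiv.Perm.mul_apply]
  have hX1 : (X 1 : Equiv.Perm Cantor) = c1 (X 0) := rfl
  induction s using cantor_cases with
  | h1 s =>
    rw [hX1]
    simp
  | h2 s =>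
    induction s using cantor_cases with
    | h1 s =>
      rw [hX1]
      simp
    | h2 s =>
      induction s using cantor_cases with
      | h1 s =>
        rw [hX1]
        simp
      | h2 s =>
        rw [hX1]
        simp

lemma ρ_lam (n : ℕ) : ρ (lam n) = c0 (X n) := by
  induction n with
  | zero => exact ρ_lam0
  | succ n ih =>
    show ρ (a⁻¹ * Ξ (lam n) * a) = c0 (X (n+1))
    rw [map_mul, map_mul, map_inv, ρ_a, ρ_Ξ, ih]
    have hr := R3 (X n)
    have : c0 (c1 (X n)) = (X 0)⁻¹ * c1 (c0 (X n)) * X 0 := by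
      rw [← hr]
      show _ = (X 0)⁻¹ * (X 0 * c0 (c1 (X n)) * (X 0)⁻¹) * X 0
      group
    rw [show (X (n+1) : Equiv.Perm Cantor) = c1 (X n) from rfl]
    rw [this]

/-- Generator images for the left-copy endomorphism. -/
def lamf : Fin 2 → P := ![lam 0, lam 1]

lemma lamf_relators : ∀ r ∈ thompsonRels, (FreeGroup.lift lamf) r = 1 := by
  intro r hr
  apply ρ_injective
  rw [map_one]
  have hcomp : ρ.comp (FreeGroup.lift lamf) = c0hom.comp (FreeGroup.lift Xf) := by
    apply FreeGroup.ext_hom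
    intro i
    fin_cases i
    · show ρ ((FreeGroup.lift lamf) (FreeGroup.of 0)) = c0hom ((FreeGroup.lift Xf) (FreeGroup.of 0))
      rw [FreeGroup.lift_apply_of, FreeGroup.lift_apply_of]
      show ρ (lam 0) = c0hom X0
      rw [ρ_lam 0]
      rfl
    · show ρ ((FreeGroup.lift lamf) (FreeGroup.of 1)) = c0hom ((FreeGroup.lift Xf) (FreeGroup.of 1))
      rw [FreeGroup.lift_apply_of, FreeGroup.lift_apply_of]
      show ρ (lam 1) = c0hom (X 1)
      rw [ρ_lam 1]
      rfl
  have := congrArg (fun ψ => ψ r) hcomp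
  simp only [MonoidHom.comp_apply] at this
  rw [this, Xf_relators r hr]
  simp

/-- The left-copy endomorphism `Λ`. -/
def Λ : P →* P := PresentedGroup.toGroup lamf_relators

@[simp] lemma Λ_a : Λ a = lam 0 := PresentedGroup.toGroup.of lamf_relators
@[simp] lemma Λ_b : Λ b = lam 1 := PresentedGroup.toGroup.of lamf_relators

lemma ρ_Λ (g : P) : ρ (Λ g) = c0 (ρ g) := by
  have h : ρ.comp Λ = c0hom.comp ρ := by
    apply PresentedGroup.ext
    intro i
    fin_cases i
    · show ρ (Λ a) = c0hom (ρ a)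
      rw [Λ_a, ρ_a, ρ_lam 0]
      rfl
    · show ρ (Λ b) = c0hom (ρ b)
      rw [Λ_b, ρ_b, ρ_lam 1]
      rfl
  have := congrArg (fun ψ => ψ g) h
  simpa using this

/-- Navigation words : `ρ (nav β)` maps the cylinder `C₁₀` into `C_β`. -/
def nav : List Bool → P
  | [] => 1
  | true :: β => Ξ (nav β) * a
  | false :: β => Λ (nav β) * (lam 0 * a⁻¹ * a⁻¹)

lemma nav_maps : ∀ β : List Bool, ∀ s : Cantor,
    ∃ t : Cantor, ρ (nav β) (cns true (cns false s)) = app β t := by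
  intro β
  induction β with
  | nil => exact fun s => ⟨cns true (cns false s), by simp [nav]⟩
  | cons bb β ih =>
    intro s
    cases bb with
    | true =>
      obtain ⟨t, ht⟩ := ih s
      refine ⟨t, ?_⟩
      show ρ (Ξ (nav β) * a) (cns true (cns false s)) = app (true :: β) t
      rw [map_mul, ρ_a, Equiv.Perm.mul_apply, ρ_Ξ]
      rw [show X 0 (cns true (cns false s)) = cns true (cns true (cns false s)) from f0_tt _]
      rw [c1_t, ht]
      simp
    | false =>
      obtain ⟨t, ht⟩ := ih s
      refine ⟨t, ?_⟩
      show ρ (Λ (nav β) * (lam 0 * a⁻¹ * a⁻¹)) (cns true (cns false s)) = app (false :: β) t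
      rw [map_mul, Equiv.Perm.mul_apply]
      have hv : ρ (lam 0 * a⁻¹ * a⁻¹) (cns true (cns false s))
          = cns false (cns true (cns false s)) := by
        rw [map_mul, map_mul, map_inv, ρ_a, ρ_lam0]
        simp only [Equiv.Perm.mul_apply]
        rw [show ((X 0)⁻¹ : Equiv.Perm Cantor) (cns true (cns false s))
            = cns false (cns true s) from g0_tf _]
        rw [show ((X 0)⁻¹ : Equiv.Perm Cantor) (cns false (cns true s))
            = cns false (cns false (cns true s)) from g0_f _]
        rw [c0_f]
        rw [show X0 (cns false (cns true s)) = cns true (cns false s) from f0_ft _]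
      rw [hv, ρ_Λ, c0_f, ht]
      simp

end ThompsonAux

namespace ThompsonAux

/-! ### Copies at addresses and the transport lemma -/

def cAddr : List Bool → Equiv.Perm Cantor → Equiv.Perm Cantor
  | [], π => π
  | true :: β, π => c1 (cAddr β π)
  | false :: β, π => c0 (cAddr β π)

lemma cns_inj {bb : Bool} {s t : Cantor} (h : cns bb s = cns bb t) : s = t := by
  have := congrArg tl h
  simpa using this

lemma app_inj {β : List Bool} {s t : Cantor} (h : app β s = app β t) : s = t := by
  funext j
  have := congrArg (fun z => z (β.length + j)) h
  simpa [app_add] using this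

lemma cAddr_app : ∀ (β : List Bool) (π : Equiv.Perm Cantor) (s : Cantor),
    cAddr β π (app β s) = app β (π s) := by
  intro β
  induction β with
  | nil => intro π s; rfl
  | cons bb β ih =>
    intro π s
    cases bb with
    | true =>
      show c1 (cAddr β π) (cns true (app β s)) = cns true (app β (π s))
      rw [c1_t, ih]
    | false =>
      show c0 (cAddr β π) (cns false (app β s)) = cns false (app β (π s))
      rw [c0_f, ih]

lemma cAddr_fix : ∀ (β : List Bool) (π : Equiv.Perm Cantor) (z : Cantor),
    (∀ s, z ≠ app β s) → cAddr β π z = z := by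
  intro β
  induction β with
  | nil => intro π z h; exact absurd rfl (h z)
  | cons bb β ih =>
    intro π z h
    induction z using cantor_cases with
    | h1 z =>
      cases bb with
      | true =>
        show c1 (cAddr β π) (cns true z) = cns true z
        rw [c1_t]
        have hz : cAddr β π z = z :=
          ih π z (fun s hs => h s (by rw [app_cons, hs]))
        rw [hz]
      | false =>
        show c0 (cAddr β π) (cns true z) = cns true z
        rw [c0_t]
    | h2 z =>
      cases bb with
      | true =>
        show c1 (cAddr β π) (cns false z) = cns false z
        rw [c1_f]
      | false =>
        show c0 (cAddr β π) (cns false z) = cns false z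
        rw [c0_f]
        have hz : cAddr β π z = z :=
          ih π z (fun s hs => h s (by rw [app_cons, hs]))
        rw [hz]

lemma cAddr_moves {β : List Bool} {π : Equiv.Perm Cantor} {z : Cantor}
    (h : cAddr β π z ≠ z) : ∃ s, z = app β s := by
  by_contra hc
  push_neg at hc
  exact h (cAddr_fix β π z hc)

lemma cAddr_inv (β : List Bool) (π : Equiv.Perm Cantor) :
    (cAddr β π)⁻¹ = cAddr β π⁻¹ := by
  induction β with
  | nil => rfl
  | cons bb β ih =>
    cases bb with
    | true =>
      show (c1 (cAddr β π))⁻¹ = c1 (cAddr β π⁻¹)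
      rw [← c1_inv, ih]
    | false =>
      show (c0 (cAddr β π))⁻¹ = c0 (cAddr β π⁻¹)
      rw [← c0_inv, ih]

/-- The conjugation-transport lemma. -/
lemma CT {W π : Equiv.Perm Cantor} {δ γ : List Bool} {S₀ : Cantor → Prop}
    (hfix : ∀ s, ¬ S₀ s → π s = s)
    (hmap : ∀ s, S₀ s → W (app δ s) = app γ s) :
    W * cAddr δ π * W⁻¹ = cAddr γ π := by
  have hinv : ∀ s, S₀ s → S₀ (π s) := by
    intro s hs
    by_contra hc
    have h1 : π (π s) = π s := hfix _ hc
    have h2 : π s = s := π.injective h1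
    rw [h2] at hc
    exact hc hs
  apply perm_ext
  intro z
  simp only [Equiv.Perm.mul_apply]
  by_cases hγ : ∃ s, S₀ s ∧ z = app γ s
  · obtain ⟨s, hS, rfl⟩ := hγ
    have hWinv : W⁻¹ (app γ s) = app δ s := by
      rw [← hmap s hS]
      simp
    rw [hWinv, cAddr_app, hmap _ (hinv s hS), cAddr_app]
  · push_neg at hγ
    have hRHS : cAddr γ π z = z := by
      by_cases hz : ∃ s, z = app γ s
      · obtain ⟨s, rfl⟩ := hz
        have hnS : ¬ S₀ s := fun hS => (hγ s hS) rfl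
        rw [cAddr_app, hfix _ hnS]
      · push_neg at hz
        exact cAddr_fix γ π z hz
    rw [hRHS]
    have hLHS : cAddr δ π (W⁻¹ z) = W⁻¹ z := by
      by_cases hy : ∃ s, W⁻¹ z = app δ s
      · obtain ⟨s, hy⟩ := hy
        by_cases hS : S₀ s
        · exfalso
          have : z = app γ s := by
            rw [← hmap s hS, ← hy]
            simp
          exact hγ s hS this
        · rw [hy, cAddr_app, hfix _ hS]
      · push_neg at hy
        exact cAddr_fix δ π _ hy
    rw [hLHS]
    simp

end ThompsonAux

namespace ThompsonAux

/-! ### The concrete conjugating element -/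

lemma X1e : X 1 = c1 (X 0) := rfl
lemma X2e : X 2 = c1 (X 1) := rfl
lemma X3e : X 3 = c1 (X 2) := rfl
lemma X4e : X 4 = c1 (X 3) := rfl
lemma X5e : X 5 = c1 (X 4) := rfl
lemma X6e : X 6 = c1 (X 5) := rfl
lemma X7e : X 7 = c1 (X 6) := rfl

/-- The conjugator. -/
def Wel : P := (Pl [4,2,1,0])⁻¹ * Pl [7,6,4,4,3,2,1]

lemma ρ_Wel_apply (z : Cantor) :
    ρ Wel z = (X 0)⁻¹ ((X 1)⁻¹ ((X 2)⁻¹ ((X 4)⁻¹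
      (X 7 (X 6 (X 4 (X 4 (X 3 (X 2 (X 1 z)))))))))) := by
  show ρ ((Pl [4,2,1,0])⁻¹ * Pl [7,6,4,4,3,2,1]) z = _
  rw [map_mul, map_inv, ρ_Pl, ρ_Pl]
  simp only [Xl, List.map_cons, List.map_nil, List.prod_cons, List.prod_nil, mul_one,
    mul_inv_rev, Equiv.Perm.mul_apply, Equiv.Perm.one_apply]

set_option maxRecDepth 10000 in
/-- The four pieces of the prefix-substitution property of `Wel`. -/
lemma Wel_piece1 (s : Cantor) :
    ρ Wel (app [true,false,true,true,true] (cns false (cns false s)))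
      = app [true] (cns false (cns false s)) := by
  show ρ Wel (cns true (cns false (cns true (cns true (cns true (cns false (cns false s)))))))
      = cns true (cns false (cns false s))
  rw [ρ_Wel_apply]
  simp only [X1e, X2e, X3e, X4e, X5e, X6e, X7e, c1_inv_simp, c1_t, c1_f,
    X0_tt', X0_ff', X0_ft', X0_inv_f', X0_inv_tf', X0_inv_tt',
    X_zero_tt, X_zero_ff, X_zero_ft, X_zero_inv_f, X_zero_inv_tf, X_zero_inv_tt]

set_option maxRecDepth 10000 in
lemma Wel_piece2 (s : Cantor) :
    ρ Wel (app [true,false,true,true,true] (cns false (cns true s)))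
      = app [true] (cns false (cns true s)) := by
  show ρ Wel (cns true (cns false (cns true (cns true (cns true (cns false (cns true s)))))))
      = cns true (cns false (cns true s))
  rw [ρ_Wel_apply]
  simp only [X1e, X2e, X3e, X4e, X5e, X6e, X7e, c1_inv_simp, c1_t, c1_f,
    X0_tt', X0_ff', X0_ft', X0_inv_f', X0_inv_tf', X0_inv_tt',
    X_zero_tt, X_zero_ff, X_zero_ft, X_zero_inv_f, X_zero_inv_tf, X_zero_inv_tt]

set_option maxRecDepth 10000 in
lemma Wel_piece3 (s : Cantor) :
    ρ Wel (app [true,false,true,true,true] (cns true (cns false s)))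
      = app [true] (cns true (cns false s)) := by
  show ρ Wel (cns true (cns false (cns true (cns true (cns true (cns true (cns false s)))))))
      = cns true (cns true (cns false s))
  rw [ρ_Wel_apply]
  simp only [X1e, X2e, X3e, X4e, X5e, X6e, X7e, c1_inv_simp, c1_t, c1_f,
    X0_tt', X0_ff', X0_ft', X0_inv_f', X0_inv_tf', X0_inv_tt',
    X_zero_tt, X_zero_ff, X_zero_ft, X_zero_inv_f, X_zero_inv_tf, X_zero_inv_tt]

set_option maxRecDepth 10000 in
lemma Wel_piece4 (s : Cantor) :
    ρ Wel (app [true,false,true,true,true] (cns true (cns true (cns false s))))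
      = app [true] (cns true (cns true (cns false s))) := by
  show ρ Wel (cns true (cns false (cns true (cns true (cns true (cns true (cns true (cns false s))))))))
      = cns true (cns true (cns true (cns false s)))
  rw [ρ_Wel_apply]
  simp only [X1e, X2e, X3e, X4e, X5e, X6e, X7e, c1_inv_simp, c1_t, c1_f,
    X0_tt', X0_ff', X0_ft', X0_inv_f', X0_inv_tf', X0_inv_tt',
    X_zero_tt, X_zero_ff, X_zero_ft, X_zero_inv_f, X_zero_inv_tf, X_zero_inv_tt]

end ThompsonAux

namespace ThompsonAux

/-! ### The key identity and the main theorem -/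

def Sz : Cantor → Prop := fun s => ¬ (s 0 = true ∧ s 1 = true ∧ s 2 = true)

lemma Y_fix : ∀ s : Cantor, ¬ Sz s → (X 1 * (X 0)⁻¹) s = s := by
  intro s hs
  have h : s 0 = true ∧ s 1 = true ∧ s 2 = true := not_not.mp hs
  obtain ⟨h0, h1, h2⟩ := h
  have e3 : tl (tl s) = cns true (tl (tl (tl s))) := (eta' (show (tl (tl s)) 0 = true from h2)).symm
  have e2 : tl s = cns true (cns true (tl (tl (tl s)))) := by
    rw [← e3]; exact (eta' (show tl s 0 = true from h1)).symm
  have e1 : s = cns true (cns true (cns true (tl (tl (tl s))))) := by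
    rw [← e2]; exact (eta' h0).symm
  rw [e1]
  simp only [Equiv.Perm.mul_apply, X_zero_inv_tt, X1e, c1_t, X_zero_tt]

lemma Wel_map : ∀ s : Cantor, Sz s →
    ρ Wel (app [true,false,true,true,true] s) = app [true] s := by
  intro s hs
  rcases h0 : s 0 with _ | _
  · rcases h1 : s 1 with _ | _
    · have e : s = cns false (cns false (tl (tl s))) := by
        have e2 : tl s = cns false (tl (tl s)) := (eta' (show tl s 0 = false from h1)).symm
        rw [← e2]; exact (eta' h0).symm
      rw [e]; exact Wel_piece1 _
    · have e : s = cns false (cns true (tl (tl s))) := by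
        have e2 : tl s = cns true (tl (tl s)) := (eta' (show tl s 0 = true from h1)).symm
        rw [← e2]; exact (eta' h0).symm
      rw [e]; exact Wel_piece2 _
  · rcases h1 : s 1 with _ | _
    · have e : s = cns true (cns false (tl (tl s))) := by
        have e2 : tl s = cns false (tl (tl s)) := (eta' (show tl s 0 = false from h1)).symm
        rw [← e2]; exact (eta' h0).symm
      rw [e]; exact Wel_piece3 _
    · have h2 : s 2 = false := by
        rcases h2 : s 2 with _ | _
        · rfl
        · exact absurd ⟨h0, h1, h2⟩ hs
      have e : s = cns true (cns true (cns false (tl (tl (tl s))))) := by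
        have e3 : tl (tl s) = cns false (tl (tl (tl s))) :=
          (eta' (show (tl (tl s)) 0 = false from h2)).symm
        have e2 : tl s = cns true (cns false (tl (tl (tl s)))) := by
          rw [← e3]; exact (eta' (show tl s 0 = true from h1)).symm
        rw [← e2]; exact (eta' h0).symm
      rw [e]; exact Wel_piece4 _

lemma cAddr_mul (β : List Bool) (p q : Equiv.Perm Cantor) :
    cAddr β (p * q) = cAddr β p * cAddr β q := by
  induction β with
  | nil => rfl
  | cons bb β ih =>
    cases bb with
    | true => show c1 (cAddr β (p * q)) = _; rw [ih, c1_mul]; rfl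
    | false => show c0 (cAddr β (p * q)) = _; rw [ih, c0_mul]; rfl

def uu : P := Ξ (Λ (x 1))
def vv : P := Ξ (Λ (x 3))

lemma ρ_uu : ρ uu = cAddr [true, false] (X 1) := by
  show ρ (Ξ (Λ (x 1))) = c1 (c0 (X 1))
  rw [ρ_Ξ, ρ_Λ, ρ_x]

lemma ρ_vv : ρ vv = cAddr [true, false] (X 3) := by
  show ρ (Ξ (Λ (x 3))) = c1 (c0 (X 3))
  rw [ρ_Ξ, ρ_Λ, ρ_x]

lemma comm_model :
    ρ (uu * vv * uu⁻¹ * vv⁻¹) = cAddr [true,false,true,true,true] (X 1 * (X 0)⁻¹) := by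
  rw [map_mul, map_mul, map_mul, map_inv, map_inv, ρ_uu, ρ_vv]
  rw [cAddr_inv, cAddr_inv, ← cAddr_mul, ← cAddr_mul, ← cAddr_mul]
  have inner : X 1 * X 3 * (X 1)⁻¹ * (X 3)⁻¹ = X 4 * (X 3)⁻¹ := by
    have h := Xrel 1 3 (by omega)
    calc X 1 * X 3 * (X 1)⁻¹ * (X 3)⁻¹ = (X 1 * X 3 * (X 1)⁻¹) * (X 3)⁻¹ := by group
      _ = X 4 * (X 3)⁻¹ := by rw [h]
  rw [inner]
  have h2 : (X 4 : Equiv.Perm Cantor) * (X 3)⁻¹ = cAddr [true,true,true] (X 1 * (X 0)⁻¹) := by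
    show _ = c1 (c1 (c1 (X 1 * (X 0)⁻¹)))
    calc (X 4 : Equiv.Perm Cantor) * (X 3)⁻¹
        = c1 (c1 (c1 (X 1))) * (c1 (c1 (c1 (X 0))))⁻¹ := rfl
      _ = c1 (c1 (c1 (X 1))) * c1 (c1 (c1 ((X 0)⁻¹))) := by simp only [c1_inv_simp]
      _ = c1 (c1 (c1 (X 1 * (X 0)⁻¹))) := by rw [← c1_mul, ← c1_mul, ← c1_mul]
  rw [h2]
  rfl

/-- The crucial identity in `P`. -/
lemma key_identity : Wel * (uu * vv * uu⁻¹ * vv⁻¹) * Wel⁻¹ = x 2 * (x 1)⁻¹ := by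
  apply ρ_injective
  rw [map_mul, map_mul, map_inv, comm_model]
  have hCT := CT (W := ρ Wel) (π := X 1 * (X 0)⁻¹) (δ := [true,false,true,true,true])
    (γ := [true]) (S₀ := Sz) Y_fix Wel_map
  rw [hCT, map_mul, map_inv, ρ_x, ρ_x]
  show c1 (X 1 * (X 0)⁻¹) = X 2 * (X 1)⁻¹
  rw [c1_mul]
  rw [show c1 ((X 0)⁻¹) = (c1 (X 0))⁻¹ from (c1_inv_simp _).symm]
  rfl

/-- The disjoint-support commutator trick, membership form. -/
lemma comm_mem {N : Subgroup P} [hN : N.Normal] {n g h : P}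
    (hn : n ∈ N) (hc : Commute (n * g⁻¹ * n⁻¹) h) :
    g * h * g⁻¹ * h⁻¹ ∈ N := by
  have hq : g * n * g⁻¹ * n⁻¹ ∈ N := by
    have h1 : g * n * g⁻¹ ∈ N := hN.conj_mem n hn g
    exact mul_mem h1 (inv_mem hn)
  have hqh : (g * n * g⁻¹ * n⁻¹) * (h * (g * n * g⁻¹ * n⁻¹)⁻¹ * h⁻¹) ∈ N := by
    refine mul_mem hq ?_
    exact hN.conj_mem _ (inv_mem hq) h
  have hid : (g * n * g⁻¹ * n⁻¹) * (h * (g * n * g⁻¹ * n⁻¹)⁻¹ * h⁻¹)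
      = g * h * g⁻¹ * h⁻¹ := by
    have hcc := hc.eq
    calc (g * n * g⁻¹ * n⁻¹) * (h * (g * n * g⁻¹ * n⁻¹)⁻¹ * h⁻¹)
        = g * ((n * g⁻¹ * n⁻¹) * h) * (n * g * n⁻¹) * g⁻¹ * h⁻¹ := by group
      _ = g * (h * (n * g⁻¹ * n⁻¹)) * (n * g * n⁻¹) * g⁻¹ * h⁻¹ := by rw [hcc]
      _ = g * h * g⁻¹ * h⁻¹ := by group
  rw [← hid]
  exact hqh

/-- Commutation certificate from a moved cylinder. -/
lemma cert {n' w v' : P} {π τ : Equiv.Perm Cantor}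
    (hw : ρ w = cAddr [true, false] π) (hv : ρ v' = cAddr [true, false] τ)
    (hdisj : ∀ s t : Cantor, ρ n' (app [true, false] s) ≠ app [true, false] t) :
    Commute (n' * w⁻¹ * n'⁻¹) v' := by
  have hperm : ∀ z : Cantor, ρ (n' * w⁻¹ * n'⁻¹) z = z ∨ ρ v' z = z := by
    intro z
    by_cases h2 : ρ v' z = z
    · exact Or.inr h2
    · left
      have hz : ∃ s, z = app [true, false] s := by
        apply cAddr_moves (π := τ)
        rw [← hv]
        exact h2
      have e1 : ρ (n' * w⁻¹ * n'⁻¹) z = ρ n' ((ρ w)⁻¹ ((ρ n')⁻¹ z)) := by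
        rw [map_mul, map_mul, map_inv, map_inv]
        simp [Equiv.Perm.mul_apply]
      rw [e1]
      have hfixed : (ρ w)⁻¹ ((ρ n')⁻¹ z) = (ρ n')⁻¹ z := by
        by_contra hmove
        have : ∃ s, (ρ n')⁻¹ z = app [true, false] s := by
          apply cAddr_moves (π := π⁻¹)
          rw [← cAddr_inv, ← hw]
          exact hmove
        obtain ⟨s, hs⟩ := this
        obtain ⟨t, ht⟩ := hz
        apply hdisj s t
        rw [← hs, ht]
        simp
      rw [hfixed]
      simp
  have hD : (ρ (n' * w⁻¹ * n'⁻¹)).Disjoint (ρ v') := hperm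
  have hcp : Commute (ρ (n' * w⁻¹ * n'⁻¹)) (ρ v') := hD.commute
  apply ρ_injective
  calc ρ ((n' * w⁻¹ * n'⁻¹) * v') = ρ (n' * w⁻¹ * n'⁻¹) * ρ v' := map_mul _ _ _
    _ = ρ v' * ρ (n' * w⁻¹ * n'⁻¹) := hcp.eq
    _ = ρ (v' * (n' * w⁻¹ * n'⁻¹)) := (map_mul _ _ _).symm

end ThompsonAux

namespace ThompsonAux

lemma x2_eq : x 2 = a * b * a⁻¹ := rfl
lemma x1_eq : x 1 = b := rfl

end ThompsonAux

open ThompsonAux in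
/-- Thompson's group `F` has no proper non-abelian quotients: every non-injective
group homomorphism from `F` to any group has abelian image. -/
theorem thompsonF_no_proper_nonabelian_quotients {G : Type*} [Group G]
    (φ : ThompsonF →* G) (hφ : ¬ Function.Injective φ) :
    ∀ x y : ThompsonF, Commute (φ x) (φ y) := by
  classical
  -- extract a nontrivial kernel element
  obtain ⟨p, q, hpq, hne⟩ := Function.not_injective_iff.mp hφ
  set n : P := p * q⁻¹ with hndef
  have hn1 : n ≠ 1 := by
    intro h
    apply hne
    have : p = q := by
      have := h
      rw [hndef] at this
      group at this
      exact mul_inv_eq_one.mp h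
    exact this
  have hnker : n ∈ φ.ker := by
    rw [MonoidHom.mem_ker, hndef, map_mul, map_inv, hpq]
    group
  -- a moved cylinder
  have hρn : ρ n ≠ 1 := by
    intro h
    apply hn1
    apply ρ_injective
    rw [h, map_one]
  obtain ⟨β, hβ⟩ := exists_moved_cyl hρn
  -- conjugate so that the standard cylinder C₁₀ is moved off itself
  set n' : P := (nav β)⁻¹ * n * nav β with hn'def
  have hn'ker : n' ∈ φ.ker := by
    rw [MonoidHom.mem_ker, hn'def, map_mul, map_mul, map_inv]
    rw [MonoidHom.mem_ker.mp hnker]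
    group
  have hdisj : ∀ s t : Cantor, ρ n' (app [true, false] s) ≠ app [true, false] t := by
    intro s t heq
    obtain ⟨t₁, ht₁⟩ := nav_maps β s
    obtain ⟨t₂, ht₂⟩ := nav_maps β t
    have happ : ∀ (u : Cantor), app [true, false] u = cns true (cns false u) := by
      intro u; rfl
    have h1 : ρ n' (app [true, false] s)
        = (ρ (nav β))⁻¹ (ρ n (ρ (nav β) (app [true, false] s))) := by
      rw [hn'def, map_mul, map_mul, map_inv]
      simp [Equiv.Perm.mul_apply]
    rw [heq] at h1
    have h2 : ρ n (ρ (nav β) (app [true, false] s)) = ρ (nav β) (app [true, false] t) := by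
      have := congrArg (fun z => ρ (nav β) z) h1
      simpa using this.symm
    rw [happ, ht₁, happ, ht₂] at h2
    exact hβ t₁ t₂ h2
  -- the commutator of the two standard copies lies in the kernel
  have hcomm : Commute (n' * uu⁻¹ * n'⁻¹) vv := cert ρ_uu ρ_vv hdisj
  have hmem : uu * vv * uu⁻¹ * vv⁻¹ ∈ φ.ker := comm_mem hn'ker hcomm
  have hconj : Wel * (uu * vv * uu⁻¹ * vv⁻¹) * Wel⁻¹ ∈ φ.ker :=
    (MonoidHom.normal_ker φ).conj_mem _ hmem _
  rw [key_identity] at hconj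
  -- so the images of a and b commute
  have hx21 : φ (x 2) = φ (x 1) := by
    have := MonoidHom.mem_ker.mp hconj
    rw [map_mul, map_inv] at this
    exact mul_inv_eq_one.mp this
  have hab : Commute (φ a) (φ b) := by
    have h1 : φ a * φ b * (φ a)⁻¹ = φ b := by
      have := hx21
      rw [x2_eq, x1_eq, map_mul, map_mul, map_inv] at this
      exact this
    show φ a * φ b = φ b * φ a
    calc φ a * φ b = (φ a * φ b * (φ a)⁻¹) * φ a := by group
      _ = φ b * φ a := by rw [h1]
  -- every image lies in the subgroup generated by φ a and φ b
  have himg : ∀ g : P, φ g ∈ Subgroup.closure {φ a, φ b} := by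
    intro g
    have hg : g ∈ Subgroup.closure (Set.range (PresentedGroup.of : Fin 2 → P)) := by
      rw [PresentedGroup.closure_range_of]
      trivial
    refine Subgroup.closure_induction ?_ ?_ ?_ ?_ hg
    · rintro y ⟨i, rfl⟩
      fin_cases i
      · exact Subgroup.subset_closure (by left; rfl)
      · exact Subgroup.subset_closure (by right; rfl)
    · rw [map_one]; exact one_mem _
    · intro y z _ _ hy hz
      rw [map_mul]; exact mul_mem hy hz
    · intro y _ hy
      rw [map_inv]; exact inv_mem hy
  -- elements of a subgroup generated by two commuting elements commute
  have hcl : ∀ u ∈ Subgroup.closure {φ a, φ b}, ∀ v ∈ Subgroup.closure {φ a, φ b},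
      Commute u v := by
    intro u hu v hv
    refine Subgroup.closure_induction₂ ?_ ?_ ?_ ?_ ?_ ?_ ?_ hu hv
    · intro z w hz hw
      rcases hz with rfl | hz
      · rcases hw with rfl | hw
        · exact Commute.refl _
        · rw [Set.mem_singleton_iff] at hw; subst hw; exact hab
      · rw [Set.mem_singleton_iff] at hz; subst hz
        rcases hw with rfl | hw
        · exact hab.symm
        · rw [Set.mem_singleton_iff] at hw; subst hw; exact Commute.refl _
    · intro z _; exact Commute.one_left z
    · intro z _; exact Commute.one_right z
    · intro z w y _ _ _ h1 h2; exact h1.mul_left h2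
    · intro z w y _ _ _ h1 h2; exact h1.mul_right h2
    · intro z w _ _ h; exact h.inv_left
    · intro z w _ _ h; exact h.inv_right
  intro g1 g2
  exact hcl _ (himg g1) _ (himg g2)
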